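/- arXiv:2405.10044 — 8 statements merged into one kernel-verified Lean document; each statement's English description precedes it below -/
import Mathlib

section
/- The free group on two generators embeds into the free product of the cyclic groups Z/2Z and Z/3Z; that is, there exists an injective group homomorphism from the free group F_2 into Z_2 * Z_3. -/
open UpperHalfPlane ModularGroup Matrix MatrixGroups Monoid

noncomputable section PingPongSection

/-- The order-3 element `U = [[0,-1],[1,-1]]` of `SL(2,ℤ)`. -/
def Uel : SL(2, ℤ) := ⟨!![0, -1; 1, -1], by norm_num [Matrix.det_fin_two_of]⟩

lemma S_sq : ModularGroup.S ^ 2 = -1 := by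
  ext i j
  simp only [Matrix.SpecialLinearGroup.coe_pow, Matrix.SpecialLinearGroup.coe_mul]
  fin_cases i <;> fin_cases j <;>
    simp [ModularGroup.S, pow_two, Matrix.mul_fin_two]

lemma U_cube : Uel ^ 3 = 1 := by
  ext i j
  simp only [Matrix.SpecialLinearGroup.coe_pow, Matrix.SpecialLinearGroup.coe_mul]
  fin_cases i <;> fin_cases j <;>
    simp [Uel, pow_succ, pow_zero, Matrix.mul_fin_two]

lemma word_a : Uel * Uel * ModularGroup.S * Uel * Uel * ModularGroup.S
    = ModularGroup.T ^ (2:ℤ) := by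
  ext i j
  simp only [Matrix.SpecialLinearGroup.coe_pow, Matrix.SpecialLinearGroup.coe_mul]
  fin_cases i <;> fin_cases j <;>
    simp [Uel, ModularGroup.S, Matrix.mul_fin_two, ModularGroup.coe_T_zpow 2, pow_two]

def Bel : SL(2, ℤ) := ⟨!![1, 0; 2, 1], by norm_num [Matrix.det_fin_two_of]⟩

def BelInv : SL(2, ℤ) := ⟨!![1, 0; -2, 1], by norm_num [Matrix.det_fin_two_of]⟩

lemma word_b : Uel * ModularGroup.S * Uel * ModularGroup.S = Bel := by
  ext i j
  simp only [Matrix.SpecialLinearGroup.coe_pow, Matrix.SpecialLinearGroup.coe_mul]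
  fin_cases i <;> fin_cases j <;>
    simp [Uel, Bel, ModularGroup.S, Matrix.mul_fin_two]

lemma Bel_inv : Bel⁻¹ = BelInv := by
  apply inv_eq_of_mul_eq_one_right
  ext i j
  simp only [Matrix.SpecialLinearGroup.coe_pow, Matrix.SpecialLinearGroup.coe_mul]
  fin_cases i <;> fin_cases j <;>
    simp [Bel, BelInv, Matrix.mul_fin_two]

/-- A homomorphism from `Multiplicative (ZMod n)` determined by an element whose `n`-th
power is `1`. -/
def homZMod {H : Type*} [Monoid H] (n : ℕ) [NeZero n] (h : H) (hh : h ^ n = 1) :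
    Multiplicative (ZMod n) →* H where
  toFun i := h ^ (Multiplicative.toAdd i).val
  map_one' := by
    show h ^ (0 : ZMod n).val = 1
    simp [ZMod.val_zero]
  map_mul' x y := by
    show h ^ (Multiplicative.toAdd x + Multiplicative.toAdd y).val = _
    rw [ZMod.val_add, ← pow_eq_pow_mod _ hh, pow_add]

def ρ : SL(2, ℤ) →* Equiv.Perm ℍ := MulAction.toPermHom _ _

lemma ρ_smul (g : SL(2, ℤ)) (z : ℍ) : ρ g • z = g • z := rfl

lemma ρ_neg_one : ρ (-1) = 1 := by
  apply Equiv.ext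
  intro z
  show (-1 : SL(2, ℤ)) • z = z
  rw [ModularGroup.SL_neg_smul, one_smul]

lemma ρS_sq : ρ ModularGroup.S ^ 2 = 1 := by
  rw [← map_pow, S_sq, ρ_neg_one]

lemma ρU_cube : ρ Uel ^ 3 = 1 := by rw [← map_pow, U_cube, _root_.map_one]

abbrev GG := Monoid.Coprod (Multiplicative (ZMod 2)) (Multiplicative (ZMod 3))

def πh : GG →* Equiv.Perm ℍ :=
  Monoid.Coprod.lift (homZMod 2 (ρ ModularGroup.S) ρS_sq) (homZMod 3 (ρ Uel) ρU_cube)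

def xg : GG := Coprod.inl (Multiplicative.ofAdd 1)
def yg : GG := Coprod.inr (Multiplicative.ofAdd 1)

lemma π_x : πh xg = ρ ModularGroup.S := by
  show (homZMod 2 (ρ ModularGroup.S) ρS_sq) (Multiplicative.ofAdd 1) = _
  show ρ ModularGroup.S ^ (1 : ZMod 2).val = _
  norm_num [ZMod.val_one]

lemma π_y : πh yg = ρ Uel := by
  show (homZMod 3 (ρ Uel) ρU_cube) (Multiplicative.ofAdd 1) = _
  show ρ Uel ^ (1 : ZMod 3).val = _
  norm_num [ZMod.val_one]

def agen : Fin 2 → GG := ![yg * yg * xg * yg * yg * xg, yg * xg * yg * xg]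

lemma π_a0 : πh (agen 0) = ρ (ModularGroup.T ^ (2:ℤ)) := by
  show πh (yg * yg * xg * yg * yg * xg) = _
  rw [_root_.map_mul, _root_.map_mul, _root_.map_mul, _root_.map_mul, _root_.map_mul,
    π_x, π_y, ← _root_.map_mul, ← _root_.map_mul, ← _root_.map_mul, ← _root_.map_mul,
    ← _root_.map_mul, word_a]

lemma π_a1 : πh (agen 1) = ρ Bel := by
  show πh (yg * xg * yg * xg) = _
  rw [_root_.map_mul, _root_.map_mul, _root_.map_mul, π_x, π_y, ← _root_.map_mul,
    ← _root_.map_mul, ← _root_.map_mul, word_b]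

def pingAction : MulAction GG ℍ := MulAction.compHom ℍ πh

attribute [local instance] pingAction

lemma agen_smul (g : GG) (z : ℍ) : g • z = πh g • z := rfl

lemma coord_a0 (z : ℍ) : ((agen 0 • z : ℍ) : ℂ) = (z : ℂ) + 2 := by
  rw [agen_smul, π_a0, ρ_smul, ModularGroup.coe_T_zpow_smul_eq]
  norm_num

lemma coord_a0_inv (z : ℍ) : (((agen 0)⁻¹ • z : ℍ) : ℂ) = (z : ℂ) - 2 := by
  rw [agen_smul, _root_.map_inv, π_a0, ← _root_.map_inv, ← _root_.zpow_neg, ρ_smul,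
    ModularGroup.coe_T_zpow_smul_eq]
  push_cast
  ring

lemma coord_a1 (z : ℍ) : ((agen 1 • z : ℍ) : ℂ) = (z : ℂ) / (2 * z + 1) := by
  rw [agen_smul, π_a1, ρ_smul, UpperHalfPlane.specialLinearGroup_apply]
  simp [Bel]

lemma coord_a1_inv (z : ℍ) : (((agen 1)⁻¹ • z : ℍ) : ℂ) = (z : ℂ) / (-2 * z + 1) := by
  rw [agen_smul, _root_.map_inv, π_a1, ← _root_.map_inv, Bel_inv, ρ_smul,
    UpperHalfPlane.specialLinearGroup_apply]
  simp [BelInv]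

def XS : Fin 2 → Set ℍ :=
  ![{z | 1 ≤ z.re}, {z | Complex.normSq ((z : ℂ) - 1/2) ≤ 1/4}]
def YS : Fin 2 → Set ℍ :=
  ![{z | z.re ≤ -1}, {z | Complex.normSq ((z : ℂ) + 1/2) ≤ 1/4}]

lemma mem_X1 {z : ℍ} (h : z ∈ XS 1) : 0 < z.re ∧ z.re < 1 := by
  have h' : Complex.normSq ((z : ℂ) - 1/2) ≤ 1/4 := h
  rw [Complex.normSq_apply] at h'
  simp only [Complex.sub_re, Complex.sub_im, UpperHalfPlane.coe_re, UpperHalfPlane.coe_im,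
    Complex.div_re, Complex.div_im, Complex.one_re, Complex.one_im] at h'
  norm_num at h'
  have him := z.im_pos
  constructor <;> nlinarith

lemma mem_Y1 {z : ℍ} (h : z ∈ YS 1) : -1 < z.re ∧ z.re < 0 := by
  have h' : Complex.normSq ((z : ℂ) + 1/2) ≤ 1/4 := h
  rw [Complex.normSq_apply] at h'
  simp only [Complex.add_re, Complex.add_im, UpperHalfPlane.coe_re, UpperHalfPlane.coe_im,
    Complex.div_re, Complex.div_im, Complex.one_re, Complex.one_im] at h'
  norm_num at h'
  have him := z.im_pos
  constructor <;> nlinarith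

open scoped Pointwise in
lemma ping0 : agen 0 • (YS 0)ᶜ ⊆ XS 0 := by
  rintro w ⟨z, hz, rfl⟩
  have hz' : ¬ z.re ≤ -1 := hz
  show (1:ℝ) ≤ (agen 0 • z).re
  rw [← UpperHalfPlane.coe_re, coord_a0]
  simp only [Complex.add_re, UpperHalfPlane.coe_re]
  norm_num
  linarith

open scoped Pointwise in
lemma ping1 : agen 1 • (YS 1)ᶜ ⊆ XS 1 := by
  rintro w ⟨z, hz, rfl⟩
  have hz' : ¬ Complex.normSq ((z : ℂ) + 1/2) ≤ 1/4 := hz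
  have hlt : 1/4 < Complex.normSq ((z : ℂ) + 1/2) := lt_of_not_ge hz'
  show Complex.normSq (((agen 1 • z : ℍ) : ℂ) - 1/2) ≤ 1/4
  have hden : (2 * (z:ℂ) + 1) ≠ 0 := by
    intro h
    have h2 := congrArg Complex.im h
    simp [UpperHalfPlane.coe_im] at h2
    exact z.im_pos.ne' h2
  have key : ((agen 1 • z : ℍ) : ℂ) - 1/2 = -1 / (2 * (2 * (z:ℂ) + 1)) := by
    rw [coord_a1]
    rw [div_sub_div _ _ hden two_ne_zero, div_eq_div_iff (mul_ne_zero hden two_ne_zero) (mul_ne_zero two_ne_zero hden)]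
    ring
  rw [key, map_div₀, Complex.normSq_neg, Complex.normSq_one, _root_.map_mul]
  have h21 : (2 * (z:ℂ) + 1) = 2 * ((z:ℂ) + 1/2) := by ring
  rw [h21, _root_.map_mul]
  have h2 : Complex.normSq (2:ℂ) = 4 := by
    simp [Complex.normSq_apply]
    norm_num
  rw [h2]
  rw [div_le_iff₀ (by nlinarith)]
  nlinarith

open scoped Pointwise in
lemma pong0 : agen⁻¹ 0 • (XS 0)ᶜ ⊆ YS 0 := by
  rintro w ⟨z, hz, rfl⟩
  have hz' : ¬ (1:ℝ) ≤ z.re := hz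
  show ((agen 0)⁻¹ • z).re ≤ (-1:ℝ)
  rw [← UpperHalfPlane.coe_re, coord_a0_inv]
  simp only [Complex.sub_re, UpperHalfPlane.coe_re]
  norm_num
  linarith

open scoped Pointwise in
lemma pong1 : agen⁻¹ 1 • (XS 1)ᶜ ⊆ YS 1 := by
  rintro w ⟨z, hz, rfl⟩
  have hz' : ¬ Complex.normSq ((z : ℂ) - 1/2) ≤ 1/4 := hz
  have hlt : 1/4 < Complex.normSq ((z : ℂ) - 1/2) := lt_of_not_ge hz'
  show Complex.normSq ((((agen 1)⁻¹ • z : ℍ) : ℂ) + 1/2) ≤ 1/4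
  have hden : (-2 * (z:ℂ) + 1) ≠ 0 := by
    intro h
    have h2 := congrArg Complex.im h
    simp [UpperHalfPlane.coe_im] at h2
    exact z.im_pos.ne' h2
  have key : (((agen 1)⁻¹ • z : ℍ) : ℂ) + 1/2 = 1 / (2 * (-2 * (z:ℂ) + 1)) := by
    rw [coord_a1_inv]
    rw [div_add_div _ _ hden (two_ne_zero), div_eq_div_iff (by
      exact mul_ne_zero hden two_ne_zero) (mul_ne_zero two_ne_zero hden)]
    ring
  rw [key, map_div₀, Complex.normSq_one, _root_.map_mul]
  have h21 : (-2 * (z:ℂ) + 1) = -2 * ((z:ℂ) - 1/2) := by ring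
  rw [h21, _root_.map_mul]
  have h2 : Complex.normSq (-2:ℂ) = 4 := by
    simp [Complex.normSq_apply]; norm_num
  have h2' : Complex.normSq (2:ℂ) = 4 := by
    simp [Complex.normSq_apply]; norm_num
  rw [h2, h2']
  rw [div_le_iff₀ (by nlinarith)]
  nlinarith

/-- The free group on two generators embeds into the free product
`ℤ/2 * ℤ/3` of the cyclic groups of orders 2 and 3: there is an injective
group homomorphism `F₂ → ℤ₂ * ℤ₃`. -/
theorem freeGroup_two_embeds_in_coprod_zmod_two_zmod_three :
    ∃ φ : FreeGroup (Fin 2) →*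
        Monoid.Coprod (Multiplicative (ZMod 2)) (Multiplicative (ZMod 3)),
      Function.Injective φ := by
  refine ⟨FreeGroup.lift agen, FreeGroup.injective_lift_of_ping_pong agen XS YS
    ?_ ?_ ?_ ?_ ?_ ?_⟩
  · -- nonempty
    intro i
    fin_cases i
    · refine ⟨UpperHalfPlane.mk (1 + Complex.I) (by simp), ?_⟩
      show (1:ℝ) ≤ (UpperHalfPlane.mk (1 + Complex.I) _).re
      rw [UpperHalfPlane.mk_re]
      simp
    · refine ⟨UpperHalfPlane.mk (1/2 + Complex.I * (1/2)) (by norm_num), ?_⟩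
      show Complex.normSq ((UpperHalfPlane.mk (1/2 + Complex.I * (1/2)) _ : ℍ) - 1/2 : ℂ) ≤ 1/4
      rw [UpperHalfPlane.coe_mk]
      have : (1/2 + Complex.I * (1/2) : ℂ) - 1/2 = Complex.I * (1/2) := by ring
      rw [this]
      simp [Complex.normSq_apply]
      norm_num
  · -- X pairwise disjoint
    intro i j hij
    fin_cases i <;> fin_cases j <;> first
      | exact absurd rfl hij
      | · simp only [Function.onFun]
          rw [Set.disjoint_left]
          intro z hz hz'
          first
            | (have h1 : (1:ℝ) ≤ z.re := hz
               have h2 := mem_X1 hz'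
               linarith [h2.2])
            | (have h1 : (1:ℝ) ≤ z.re := hz'
               have h2 := mem_X1 hz
               linarith [h2.2])
  · -- Y pairwise disjoint
    intro i j hij
    fin_cases i <;> fin_cases j <;> first
      | exact absurd rfl hij
      | · simp only [Function.onFun]
          rw [Set.disjoint_left]
          intro z hz hz'
          first
            | (have h1 : z.re ≤ (-1:ℝ) := hz
               have h2 := mem_Y1 hz'
               linarith [h2.1])
            | (have h1 : z.re ≤ (-1:ℝ) := hz'
               have h2 := mem_Y1 hz
               linarith [h2.1])
  · -- X i disjoint Y j
    intro i j
    fin_cases i <;> fin_cases j <;>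
    · rw [Set.disjoint_left]
      intro z hz hz'
      first
        | (have h1 : (1:ℝ) ≤ z.re := hz
           have h2 : z.re ≤ (-1:ℝ) := hz'
           linarith)
        | (have h1 : (1:ℝ) ≤ z.re := hz
           have h2 := mem_Y1 hz'
           linarith [h2.2])
        | (have h1 := mem_X1 hz
           have h2 : z.re ≤ (-1:ℝ) := hz'
           linarith [h1.1])
        | (have h1 := mem_X1 hz
           have h2 := mem_Y1 hz'
           linarith [h1.1, h2.2])
  · -- ping : a i • (Y i)ᶜ ⊆ X i
    intro i
    fin_cases i
    · exact ping0
    · exact ping1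
  · -- pong : a i ⁻¹ • (X i)ᶜ ⊆ Y i
    intro i
    fin_cases i
    · exact pong0
    · exact pong1

end PingPongSection
end

section
/- Let HΓ be a finite hypergraph and let f_0 be an easy edge generating the easy edge set F. Then the set S consisting of all edges not in F together with all vertices not belonging to the source of any edge of F is ideally closed, provided that the range of f_0 equals the source of some edge of F. -/
/-! Basic notions of (finite, directed) hypergraphs, following
Trieb–Weber-style hypergraph C*-algebra combinatorics. Vertices and edges
are labelled by natural numbers. -/

structure FinHypergraph where
  V : Finset ℕ
  E : Finset ℕ
  r : ℕ → Finset ℕ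
  s : ℕ → Finset ℕ

namespace FinHypergraph

/-- Well-formedness: sources and ranges of edges consist of vertices,
and every edge has a nonempty source. -/
def WF (H : FinHypergraph) : Prop :=
  ∀ e ∈ H.E, H.s e ⊆ H.V ∧ H.r e ⊆ H.V ∧ (H.s e).Nonempty

/-- A vertex is a sink if no edge has it in its source. -/
def IsSink (H : FinHypergraph) (v : ℕ) : Prop := ∀ e ∈ H.E, v ∉ H.s e

/-- A path is a nonempty list of edges such that the range of each edge
meets the source of the next one. -/
def IsPath (H : FinHypergraph) (l : List ℕ) : Prop :=
  l ≠ [] ∧ (∀ e ∈ l, e ∈ H.E) ∧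
    List.Chain' (fun a b => (H.r a ∩ H.s b).Nonempty) l

/-- There is a path starting with edge `e` and ending with edge `f`. -/
def PathTo (H : FinHypergraph) (e f : ℕ) : Prop :=
  ∃ l : List ℕ, H.IsPath l ∧ l.head? = some e ∧ l.getLast? = some f

/-- The set of edges from which there is a path ending with `f₀`
(the "easy edge set" when `f₀` is easy). -/
noncomputable def easySet (H : FinHypergraph) (f₀ : ℕ) : Finset ℕ :=
  @Finset.filter ℕ (fun e => H.PathTo e f₀) (fun _ => Classical.propDecidable _) H.E

/-- An edge `f₀` is easy if every edge from which there is a path to `f₀`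
has exactly one vertex in its source and exactly one vertex in its range. -/
def IsEasyEdge (H : FinHypergraph) (f₀ : ℕ) : Prop :=
  f₀ ∈ H.E ∧ ∀ f ∈ H.easySet f₀, (H.s f).card = 1 ∧ (H.r f).card = 1

/-- An easy cycle of length `n`, given by edges `f 0, …, f (n-1)` and
range vertices `w 0, …, w (n-1)` (indices taken mod `n`). -/
def IsEasyCycle (H : FinHypergraph) (n : ℕ) (f w : ℕ → ℕ) : Prop :=
  0 < n ∧ (∀ i < n, f i ∈ H.E) ∧
  (∀ i < n, (H.r (f i) ∩ H.s (f ((i + 1) % n))).Nonempty) ∧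
  (∀ i < n, ∀ j < n, (H.r (f i) ∩ H.s (f j)).Nonempty → j = (i + 1) % n) ∧
  (∀ i < n, H.r (f i) = {w i}) ∧
  (∀ i < n, ∀ e ∈ H.E, w i ∈ H.r e → e = f i) ∧
  (∀ i < n, ∀ e ∈ H.E, w i ∈ H.s e → e = f ((i + 1) % n))

/-- A simple quasisink: at most one outgoing edge, which must have empty
range, and at most one incoming edge. -/
def IsSimpleQuasisink (H : FinHypergraph) (w : ℕ) : Prop :=
  (∀ e ∈ H.E, ∀ f ∈ H.E, w ∈ H.s e → w ∈ H.s f → e = f) ∧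
  (∀ e ∈ H.E, w ∈ H.s e → H.r e = ∅) ∧
  (∀ e ∈ H.E, ∀ f ∈ H.E, w ∈ H.r e → w ∈ H.r f → e = f)

/-- Normality of a hypergraph. -/
def Normal (H : FinHypergraph) : Prop :=
  (∀ e ∈ H.E, (H.r e).card ≤ 1) ∧
  (∀ e ∈ H.E,
    (∃ f ∈ H.E, f ≠ e ∧ (H.s e ∩ H.s f).Nonempty) ∨
    ((H.r e).Nonempty ∧ H.r e ⊆ H.s e)) ∧
  (∀ e ∈ H.E, ∀ f ∈ H.E, e ≠ f → (H.s e ∩ H.s f).card = 1 →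
    ((H.s e).card = 1 ∧ (H.s f).card = 1) ∨
    ∃ g ∈ H.E, g ≠ e ∧ (H.s e ∩ H.s f) ⊂ (H.s e ∩ H.s g))

/-- A reduced hypergraph: normal, no easy edge, no easy cycle, and no
edge ending in a simple quasisink. -/
def Reduced (H : FinHypergraph) : Prop :=
  H.Normal ∧ (¬∃ f₀, H.IsEasyEdge f₀) ∧ (¬∃ n f w, H.IsEasyCycle n f w) ∧
  ¬∃ f ∈ H.E, ∃ w, H.r f = {w} ∧ H.IsSimpleQuasisink w

/-- A set of vertices `SV` and edges `SE` is ideally closed. -/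
def IdeallyClosed (H : FinHypergraph) (SV SE : Finset ℕ) : Prop :=
  SV ⊆ H.V ∧ SE ⊆ H.E ∧
  (∀ e ∈ SE, H.r e ⊆ SV) ∧
  (∀ e ∈ H.E, (H.s e ⊆ SV ∨ ((H.r e).Nonempty ∧ H.r e ⊆ SV)) → e ∈ SE) ∧
  (∀ v ∈ H.V, ¬H.IsSink v → (∀ e ∈ H.E, v ∈ H.s e → e ∈ SE) → v ∈ SV)

/-! ### The seven minor operations, as relations -/

def IsVertexDeletion (H H' : FinHypergraph) : Prop :=
  ∃ v ∈ H.V,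
    H'.V = H.V.erase v ∧
    H'.E = H.E.filter (fun e => ¬ H.s e = {v}) ∧
    ∀ e ∈ H'.E, H'.r e = (H.r e).erase v ∧ H'.s e = (H.s e).erase v

def IsEdgeDeletion (H H' : FinHypergraph) : Prop :=
  ∃ f ∈ H.E,
    H'.V = H.V ∧ H'.E = H.E.erase f ∧
    ∀ e ∈ H'.E, H'.r e = H.r e ∧ H'.s e = H.s e

def IsForwardContraction (H H' : FinHypergraph) : Prop :=
  ∃ f ∈ H.E, ∃ w,
    H.s f = {w} ∧
    (∀ e ∈ H.E, e ≠ f → ¬(H.s e ∩ H.s f).Nonempty) ∧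
    (∀ e ∈ H.E, w ∈ H.r e → ¬(H.r e ∩ H.r f).Nonempty) ∧
    H'.V = H.V.erase w ∧ H'.E = H.E.erase f ∧
    ∀ e ∈ H'.E,
      H'.s e = H.s e ∧
      H'.r e = (if w ∈ H.r e then (H.r e).erase w ∪ H.r f else H.r e)

def IsBackwardContractionAt (H H' : FinHypergraph) (f : ℕ) : Prop :=
  f ∈ H.E ∧ ∃ w,
    H.r f = {w} ∧
    (∀ e ∈ H.E, e ≠ f → ¬(H.s e ∩ H.s f).Nonempty) ∧
    (∀ e ∈ H.E, (H.r e ∩ H.s f).Nonempty → w ∉ H.r e) ∧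
    H'.V = H.V.erase w ∧ H'.E = H.E.erase f ∧
    ∀ e ∈ H'.E,
      H'.r e = (if w ∈ H.r e then (H.r e).erase w ∪ H.s f else H.r e) ∧
      H'.s e = (if w ∈ H.s e then (H.s e).erase w ∪ H.s f else H.s e)

def IsBackwardContraction (H H' : FinHypergraph) : Prop :=
  ∃ f, IsBackwardContractionAt H H' f

def IsEdgeCutting (H H' : FinHypergraph) : Prop :=
  ∃ f ∈ H.E,
    H'.V = H.V ∧ H'.E = H.E ∧
    (∀ e ∈ H.E, H'.s e = H.s e) ∧
    (∀ e ∈ H.E, e ≠ f → H'.r e = H.r e) ∧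
    H'.r f = ∅

def IsSourceSeparation (H H' : FinHypergraph) : Prop :=
  ∃ (F : Finset ℕ) (w w' : ℕ),
    w ∈ H.V ∧ w' ∉ H.V ∧ F.Nonempty ∧
    F ⊂ H.E.filter (fun e => w ∈ H.s e) ∧
    H'.V = insert w' H.V ∧ H'.E = H.E ∧
    ∀ e ∈ H.E,
      H'.r e = (if w ∈ H.r e then insert w' (H.r e) else H.r e) ∧
      H'.s e = (if e ∈ F then insert w' ((H.s e).erase w) else H.s e)

def IsRangeDecomposition (H H' : FinHypergraph) : Prop :=
  ∃ f ∈ H.E, ∃ ι : ℕ → ℕ,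
    (H.r f).Nonempty ∧
    (∀ v ∈ H.r f, ι v ∉ H.E) ∧
    Set.InjOn ι (H.r f : Set ℕ) ∧
    H'.V = H.V ∧
    H'.E = H.E.erase f ∪ (H.r f).image ι ∧
    (∀ e ∈ H.E.erase f, H'.r e = H.r e ∧ H'.s e = H.s e) ∧
    (∀ v ∈ H.r f, H'.r (ι v) = {v} ∧ H'.s (ι v) = H.s f)

/-- One application of a minor operation. -/
def MinorStep (H H' : FinHypergraph) : Prop :=
  IsVertexDeletion H H' ∨ IsEdgeDeletion H H' ∨ IsForwardContraction H H' ∨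
  IsBackwardContraction H H' ∨ IsEdgeCutting H H' ∨ IsSourceSeparation H H' ∨
  IsRangeDecomposition H H'

/-- `IsMinor H' H` : the hypergraph `H'` is obtained from `H` by a finite
combination of minor operations (`H' ≤ H`). -/
def IsMinor (H' H : FinHypergraph) : Prop := Relation.ReflTransGen MinorStep H H'

/-! ### The four forbidden minors (up to labelling) -/

def IsHGamma1 (H : FinHypergraph) : Prop :=
  ∃ v₁ v₂ v₃ e f : ℕ, v₁ ≠ v₂ ∧ v₁ ≠ v₃ ∧ v₂ ≠ v₃ ∧ e ≠ f ∧
    H.V = {v₁, v₂, v₃} ∧ H.E = {e, f} ∧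
    H.s e = {v₁, v₂, v₃} ∧ H.s f = {v₁, v₂, v₃} ∧ H.r e = ∅ ∧ H.r f = ∅

def IsHGamma2 (H : FinHypergraph) : Prop :=
  ∃ v₁ v₂ e f g : ℕ, v₁ ≠ v₂ ∧ e ≠ f ∧ e ≠ g ∧ f ≠ g ∧
    H.V = {v₁, v₂} ∧ H.E = {e, f, g} ∧
    H.s e = {v₁, v₂} ∧ H.s f = {v₁, v₂} ∧ H.s g = {v₁, v₂} ∧
    H.r e = ∅ ∧ H.r f = ∅ ∧ H.r g = ∅

def IsHGamma3 (H : FinHypergraph) : Prop :=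
  ∃ v w e f : ℕ, v ≠ w ∧ e ≠ f ∧
    H.V = {v, w} ∧ H.E = {e, f} ∧
    H.s e = {v, w} ∧ H.s f = {v, w} ∧ H.r e = ∅ ∧ H.r f = {w}

def IsHGamma4 (H : FinHypergraph) : Prop :=
  ∃ v₁ v₂ w e f : ℕ, v₁ ≠ v₂ ∧ v₁ ≠ w ∧ v₂ ≠ w ∧ e ≠ f ∧
    H.V = {v₁, v₂, w} ∧ H.E = {e, f} ∧
    H.s e = {v₁, v₂} ∧ H.s f = {v₁, v₂} ∧ H.r e = {w} ∧ H.r f = {w}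

/-! ### Deletion of sets of vertices and edges -/

/-- Delete the vertices `SV` and edges `SE` (an edge whose source becomes
empty is removed as well). -/
def deleteSet (H : FinHypergraph) (SV SE : Finset ℕ) : FinHypergraph where
  V := H.V \ SV
  E := (H.E \ SE).filter (fun e => ¬ H.s e ⊆ SV)
  r := fun e => H.r e \ SV
  s := fun e => H.s e \ SV

/-- Delete a single vertex. -/
def deleteVertex (H : FinHypergraph) (v : ℕ) : FinHypergraph where
  V := H.V.erase v
  E := H.E.filter (fun e => ¬ H.s e = {v})
  r := fun e => (H.r e).erase v
  s := fun e => (H.s e).erase v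

/-- Delete a single edge. -/
def deleteEdge (H : FinHypergraph) (f : ℕ) : FinHypergraph where
  V := H.V
  E := H.E.erase f
  r := H.r
  s := H.s

/-- Delete an item: `Sum.inl v` is a vertex, `Sum.inr f` is an edge. -/
def deleteItem (H : FinHypergraph) : ℕ ⊕ ℕ → FinHypergraph
  | Sum.inl v => H.deleteVertex v
  | Sum.inr f => H.deleteEdge f

/-- Delete the items of a list one at a time, from the left. -/
def deleteList (H : FinHypergraph) (l : List (ℕ ⊕ ℕ)) : FinHypergraph :=
  l.foldl deleteItem H

/-- Range decomposition applied simultaneously to all edges: an edge `e`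
with at least two vertices in its range is replaced by the edges
`Nat.pair e (v+1)` for `v ∈ r e`, with range `{v}` and source `s e`;
all other edges are kept (renamed `Nat.pair e 0`). -/
def rangeDecomposeAll (H : FinHypergraph) : FinHypergraph where
  V := H.V
  E := H.E.biUnion (fun e =>
    if (H.r e).card ≤ 1 then {Nat.pair e 0}
    else (H.r e).image (fun v => Nat.pair e (v + 1)))
  r := fun n => if n.unpair.2 = 0 then H.r n.unpair.1 else {n.unpair.2 - 1}
  s := fun n => H.s n.unpair.1

end FinHypergraph


lemma mem_easySet' {H : FinHypergraph} {f₀ e : ℕ} :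
    e ∈ H.easySet f₀ ↔ e ∈ H.E ∧ H.PathTo e f₀ := by
  simp [FinHypergraph.easySet, Finset.mem_filter]

lemma pathTo_cons' {H : FinHypergraph} {e g f₀ : ℕ} (he : e ∈ H.E)
    (hg : H.PathTo g f₀) (hmeet : (H.r e ∩ H.s g).Nonempty) :
    H.PathTo e f₀ := by
  obtain ⟨l, ⟨hne, hmem, hch⟩, hhead, hlast⟩ := hg
  cases l with
  | nil => simp at hhead
  | cons a t =>
    simp only [List.head?_cons, Option.some.injEq] at hhead
    subst hhead
    refine ⟨e :: a :: t, ⟨by simp, ?_, ?_⟩, rfl, ?_⟩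
    · intro x hx
      rcases List.mem_cons.mp hx with h | h
      · exact h ▸ he
      · exact hmem x h
    · exact List.isChain_cons_cons.mpr ⟨hmeet, hch⟩
    · rw [List.getLast?_cons_cons]; exact hlast

lemma pathTo_cases' {H : FinHypergraph} {e f₀ : ℕ} (h : H.PathTo e f₀) :
    e = f₀ ∨ ∃ g, g ∈ H.easySet f₀ ∧ (H.r e ∩ H.s g).Nonempty := by
  obtain ⟨l, ⟨hne, hmem, hch⟩, hhead, hlast⟩ := h
  cases l with
  | nil => simp at hhead
  | cons a t =>
    simp only [List.head?_cons, Option.some.injEq] at hhead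
    subst hhead
    cases t with
    | nil => left; simpa using hlast
    | cons b t' =>
      right
      refine ⟨b, mem_easySet'.mpr ⟨hmem b (by simp), ⟨b :: t', ⟨by simp, ?_, ?_⟩, rfl, ?_⟩⟩,
        (List.isChain_cons_cons.mp hch).1⟩
      · intro x hx; exact hmem x (List.mem_cons_of_mem _ hx)
      · exact (List.isChain_cons_cons.mp hch).2
      · rw [← hlast, List.getLast?_cons_cons]

open FinHypergraph in
/-- Let `f₀` be an easy edge of `H` generating the easy edge set `F`.
If the range of `f₀` equals the source of some edge of `F`, then the set
`S` consisting of all edges not in `F` together with all vertices not in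
the source of any edge of `F` is ideally closed. -/
theorem easyEdgeSet_complement_ideallyClosed (H : FinHypergraph) (hWF : H.WF)
    (f₀ : ℕ) (hEasy : H.IsEasyEdge f₀)
    (hstar : ∃ f ∈ H.easySet f₀, H.r f₀ = H.s f) :
    H.IdeallyClosed (H.V \ (H.easySet f₀).biUnion H.s)
      (H.E \ H.easySet f₀) := by
  have hE : ∀ x ∈ H.easySet f₀, x ∈ H.E := fun x hx => (mem_easySet'.mp hx).1
  refine ⟨Finset.sdiff_subset, Finset.sdiff_subset, ?_, ?_, ?_⟩
  · -- ranges of edges not in F avoid sources of F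
    intro e he v hv
    obtain ⟨heE, heF⟩ := Finset.mem_sdiff.mp he
    refine Finset.mem_sdiff.mpr ⟨(hWF e heE).2.1 hv, ?_⟩
    intro hmem
    obtain ⟨f, hfF, hvs⟩ := Finset.mem_biUnion.mp hmem
    exact heF (mem_easySet'.mpr ⟨heE,
      pathTo_cons' heE (mem_easySet'.mp hfF).2 ⟨v, Finset.mem_inter.mpr ⟨hv, hvs⟩⟩⟩)
  · -- edges with source or nonempty range in SV are not in F
    intro e heE hcond
    refine Finset.mem_sdiff.mpr ⟨heE, fun heF => ?_⟩
    rcases hcond with hs | ⟨hrne, hr⟩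
    · obtain ⟨v, hv⟩ := (hWF e heE).2.2
      exact (Finset.mem_sdiff.mp (hs hv)).2
        (Finset.mem_biUnion.mpr ⟨e, heF, hv⟩)
    · rcases pathTo_cases' (mem_easySet'.mp heF).2 with rfl | ⟨g, hgF, ⟨v, hv⟩⟩
      · obtain ⟨f, hfF, hrf⟩ := hstar
        obtain ⟨v, hv⟩ := hrne
        exact (Finset.mem_sdiff.mp (hr hv)).2
          (Finset.mem_biUnion.mpr ⟨f, hfF, hrf ▸ hv⟩)
      · obtain ⟨hv1, hv2⟩ := Finset.mem_inter.mp hv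
        exact (Finset.mem_sdiff.mp (hr hv1)).2 (Finset.mem_biUnion.mpr ⟨g, hgF, hv2⟩)
  · -- vertices
    intro v hvV _ hall
    refine Finset.mem_sdiff.mpr ⟨hvV, fun hmem => ?_⟩
    obtain ⟨f, hfF, hvs⟩ := Finset.mem_biUnion.mp hmem
    exact (Finset.mem_sdiff.mp (hall f (hE f hfF) hvs)).2 hfF
end

section
/- Let HΓ be a finite hypergraph containing an easy cycle μ = f_1…f_n with r(f_i) = {w_i}. Then the set S = (E^0 ∪ E^1) \ {f_1,…,f_n, w_1,…,w_n} is ideally closed. -/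
/-! Basic notions of (finite, directed) hypergraphs, following
Trieb–Weber-style hypergraph C*-algebra combinatorics. Vertices and edges
are labelled by natural numbers. -/

structure NatHypergraph where
  V : Finset ℕ
  E : Finset ℕ
  r : ℕ → Finset ℕ
  s : ℕ → Finset ℕ

namespace NatHypergraph

/-- Well-formedness: sources and ranges of edges consist of vertices,
and every edge has a nonempty source. -/
def WF (H : NatHypergraph) : Prop :=
  ∀ e ∈ H.E, H.s e ⊆ H.V ∧ H.r e ⊆ H.V ∧ (H.s e).Nonempty

/-- A vertex is a sink if no edge has it in its source. -/
def IsSink (H : NatHypergraph) (v : ℕ) : Prop := ∀ e ∈ H.E, v ∉ H.s e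

/-- A path is a nonempty list of edges such that the range of each edge
meets the source of the next one. -/
def IsPath (H : NatHypergraph) (l : List ℕ) : Prop :=
  l ≠ [] ∧ (∀ e ∈ l, e ∈ H.E) ∧
    List.Chain' (fun a b => (H.r a ∩ H.s b).Nonempty) l

/-- There is a path starting with edge `e` and ending with edge `f`. -/
def PathTo (H : NatHypergraph) (e f : ℕ) : Prop :=
  ∃ l : List ℕ, H.IsPath l ∧ l.head? = some e ∧ l.getLast? = some f

/-- The set of edges from which there is a path ending with `f₀`
(the "easy edge set" when `f₀` is easy). -/
noncomputable def easySet (H : NatHypergraph) (f₀ : ℕ) : Finset ℕ :=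
  @Finset.filter ℕ (fun e => H.PathTo e f₀) (fun _ => Classical.propDecidable _) H.E

/-- An edge `f₀` is easy if every edge from which there is a path to `f₀`
has exactly one vertex in its source and exactly one vertex in its range. -/
def IsEasyEdge (H : NatHypergraph) (f₀ : ℕ) : Prop :=
  f₀ ∈ H.E ∧ ∀ f ∈ H.easySet f₀, (H.s f).card = 1 ∧ (H.r f).card = 1

/-- An easy cycle of length `n`, given by edges `f 0, …, f (n-1)` and
range vertices `w 0, …, w (n-1)` (indices taken mod `n`). -/
def IsEasyCycle (H : NatHypergraph) (n : ℕ) (f w : ℕ → ℕ) : Prop :=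
  0 < n ∧ (∀ i < n, f i ∈ H.E) ∧
  (∀ i < n, (H.r (f i) ∩ H.s (f ((i + 1) % n))).Nonempty) ∧
  (∀ i < n, ∀ j < n, (H.r (f i) ∩ H.s (f j)).Nonempty → j = (i + 1) % n) ∧
  (∀ i < n, H.r (f i) = {w i}) ∧
  (∀ i < n, ∀ e ∈ H.E, w i ∈ H.r e → e = f i) ∧
  (∀ i < n, ∀ e ∈ H.E, w i ∈ H.s e → e = f ((i + 1) % n))

/-- A simple quasisink: at most one outgoing edge, which must have empty
range, and at most one incoming edge. -/
def IsSimpleQuasisink (H : NatHypergraph) (w : ℕ) : Prop :=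
  (∀ e ∈ H.E, ∀ f ∈ H.E, w ∈ H.s e → w ∈ H.s f → e = f) ∧
  (∀ e ∈ H.E, w ∈ H.s e → H.r e = ∅) ∧
  (∀ e ∈ H.E, ∀ f ∈ H.E, w ∈ H.r e → w ∈ H.r f → e = f)

/-- Normality of a hypergraph. -/
def Normal (H : NatHypergraph) : Prop :=
  (∀ e ∈ H.E, (H.r e).card ≤ 1) ∧
  (∀ e ∈ H.E,
    (∃ f ∈ H.E, f ≠ e ∧ (H.s e ∩ H.s f).Nonempty) ∨
    ((H.r e).Nonempty ∧ H.r e ⊆ H.s e)) ∧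
  (∀ e ∈ H.E, ∀ f ∈ H.E, e ≠ f → (H.s e ∩ H.s f).card = 1 →
    ((H.s e).card = 1 ∧ (H.s f).card = 1) ∨
    ∃ g ∈ H.E, g ≠ e ∧ (H.s e ∩ H.s f) ⊂ (H.s e ∩ H.s g))

/-- A reduced hypergraph: normal, no easy edge, no easy cycle, and no
edge ending in a simple quasisink. -/
def Reduced (H : NatHypergraph) : Prop :=
  H.Normal ∧ (¬∃ f₀, H.IsEasyEdge f₀) ∧ (¬∃ n f w, H.IsEasyCycle n f w) ∧
  ¬∃ f ∈ H.E, ∃ w, H.r f = {w} ∧ H.IsSimpleQuasisink w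

/-- A set of vertices `SV` and edges `SE` is ideally closed. -/
def IdeallyClosed (H : NatHypergraph) (SV SE : Finset ℕ) : Prop :=
  SV ⊆ H.V ∧ SE ⊆ H.E ∧
  (∀ e ∈ SE, H.r e ⊆ SV) ∧
  (∀ e ∈ H.E, (H.s e ⊆ SV ∨ ((H.r e).Nonempty ∧ H.r e ⊆ SV)) → e ∈ SE) ∧
  (∀ v ∈ H.V, ¬H.IsSink v → (∀ e ∈ H.E, v ∈ H.s e → e ∈ SE) → v ∈ SV)

/-! ### The seven minor operations, as relations -/

def IsVertexDeletion (H H' : NatHypergraph) : Prop :=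
  ∃ v ∈ H.V,
    H'.V = H.V.erase v ∧
    H'.E = H.E.filter (fun e => ¬ H.s e = {v}) ∧
    ∀ e ∈ H'.E, H'.r e = (H.r e).erase v ∧ H'.s e = (H.s e).erase v

def IsEdgeDeletion (H H' : NatHypergraph) : Prop :=
  ∃ f ∈ H.E,
    H'.V = H.V ∧ H'.E = H.E.erase f ∧
    ∀ e ∈ H'.E, H'.r e = H.r e ∧ H'.s e = H.s e

def IsForwardContraction (H H' : NatHypergraph) : Prop :=
  ∃ f ∈ H.E, ∃ w,
    H.s f = {w} ∧
    (∀ e ∈ H.E, e ≠ f → ¬(H.s e ∩ H.s f).Nonempty) ∧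
    (∀ e ∈ H.E, w ∈ H.r e → ¬(H.r e ∩ H.r f).Nonempty) ∧
    H'.V = H.V.erase w ∧ H'.E = H.E.erase f ∧
    ∀ e ∈ H'.E,
      H'.s e = H.s e ∧
      H'.r e = (if w ∈ H.r e then (H.r e).erase w ∪ H.r f else H.r e)

def IsBackwardContractionAt (H H' : NatHypergraph) (f : ℕ) : Prop :=
  f ∈ H.E ∧ ∃ w,
    H.r f = {w} ∧
    (∀ e ∈ H.E, e ≠ f → ¬(H.s e ∩ H.s f).Nonempty) ∧
    (∀ e ∈ H.E, (H.r e ∩ H.s f).Nonempty → w ∉ H.r e) ∧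
    H'.V = H.V.erase w ∧ H'.E = H.E.erase f ∧
    ∀ e ∈ H'.E,
      H'.r e = (if w ∈ H.r e then (H.r e).erase w ∪ H.s f else H.r e) ∧
      H'.s e = (if w ∈ H.s e then (H.s e).erase w ∪ H.s f else H.s e)

def IsBackwardContraction (H H' : NatHypergraph) : Prop :=
  ∃ f, IsBackwardContractionAt H H' f

def IsEdgeCutting (H H' : NatHypergraph) : Prop :=
  ∃ f ∈ H.E,
    H'.V = H.V ∧ H'.E = H.E ∧
    (∀ e ∈ H.E, H'.s e = H.s e) ∧
    (∀ e ∈ H.E, e ≠ f → H'.r e = H.r e) ∧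
    H'.r f = ∅

def IsSourceSeparation (H H' : NatHypergraph) : Prop :=
  ∃ (F : Finset ℕ) (w w' : ℕ),
    w ∈ H.V ∧ w' ∉ H.V ∧ F.Nonempty ∧
    F ⊂ H.E.filter (fun e => w ∈ H.s e) ∧
    H'.V = insert w' H.V ∧ H'.E = H.E ∧
    ∀ e ∈ H.E,
      H'.r e = (if w ∈ H.r e then insert w' (H.r e) else H.r e) ∧
      H'.s e = (if e ∈ F then insert w' ((H.s e).erase w) else H.s e)

def IsRangeDecomposition (H H' : NatHypergraph) : Prop :=
  ∃ f ∈ H.E, ∃ ι : ℕ → ℕ,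
    (H.r f).Nonempty ∧
    (∀ v ∈ H.r f, ι v ∉ H.E) ∧
    Set.InjOn ι (H.r f : Set ℕ) ∧
    H'.V = H.V ∧
    H'.E = H.E.erase f ∪ (H.r f).image ι ∧
    (∀ e ∈ H.E.erase f, H'.r e = H.r e ∧ H'.s e = H.s e) ∧
    (∀ v ∈ H.r f, H'.r (ι v) = {v} ∧ H'.s (ι v) = H.s f)

/-- One application of a minor operation. -/
def MinorStep (H H' : NatHypergraph) : Prop :=
  IsVertexDeletion H H' ∨ IsEdgeDeletion H H' ∨ IsForwardContraction H H' ∨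
  IsBackwardContraction H H' ∨ IsEdgeCutting H H' ∨ IsSourceSeparation H H' ∨
  IsRangeDecomposition H H'

/-- `IsMinor H' H` : the hypergraph `H'` is obtained from `H` by a finite
combination of minor operations (`H' ≤ H`). -/
def IsMinor (H' H : NatHypergraph) : Prop := Relation.ReflTransGen MinorStep H H'

/-! ### The four forbidden minors (up to labelling) -/

def IsHGamma1 (H : NatHypergraph) : Prop :=
  ∃ v₁ v₂ v₃ e f : ℕ, v₁ ≠ v₂ ∧ v₁ ≠ v₃ ∧ v₂ ≠ v₃ ∧ e ≠ f ∧
    H.V = {v₁, v₂, v₃} ∧ H.E = {e, f} ∧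
    H.s e = {v₁, v₂, v₃} ∧ H.s f = {v₁, v₂, v₃} ∧ H.r e = ∅ ∧ H.r f = ∅

def IsHGamma2 (H : NatHypergraph) : Prop :=
  ∃ v₁ v₂ e f g : ℕ, v₁ ≠ v₂ ∧ e ≠ f ∧ e ≠ g ∧ f ≠ g ∧
    H.V = {v₁, v₂} ∧ H.E = {e, f, g} ∧
    H.s e = {v₁, v₂} ∧ H.s f = {v₁, v₂} ∧ H.s g = {v₁, v₂} ∧
    H.r e = ∅ ∧ H.r f = ∅ ∧ H.r g = ∅

def IsHGamma3 (H : NatHypergraph) : Prop :=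
  ∃ v w e f : ℕ, v ≠ w ∧ e ≠ f ∧
    H.V = {v, w} ∧ H.E = {e, f} ∧
    H.s e = {v, w} ∧ H.s f = {v, w} ∧ H.r e = ∅ ∧ H.r f = {w}

def IsHGamma4 (H : NatHypergraph) : Prop :=
  ∃ v₁ v₂ w e f : ℕ, v₁ ≠ v₂ ∧ v₁ ≠ w ∧ v₂ ≠ w ∧ e ≠ f ∧
    H.V = {v₁, v₂, w} ∧ H.E = {e, f} ∧
    H.s e = {v₁, v₂} ∧ H.s f = {v₁, v₂} ∧ H.r e = {w} ∧ H.r f = {w}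

/-! ### Deletion of sets of vertices and edges -/

/-- Delete the vertices `SV` and edges `SE` (an edge whose source becomes
empty is removed as well). -/
def deleteSet (H : NatHypergraph) (SV SE : Finset ℕ) : NatHypergraph where
  V := H.V \ SV
  E := (H.E \ SE).filter (fun e => ¬ H.s e ⊆ SV)
  r := fun e => H.r e \ SV
  s := fun e => H.s e \ SV

/-- Delete a single vertex. -/
def deleteVertex (H : NatHypergraph) (v : ℕ) : NatHypergraph where
  V := H.V.erase v
  E := H.E.filter (fun e => ¬ H.s e = {v})
  r := fun e => (H.r e).erase v
  s := fun e => (H.s e).erase v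

/-- Delete a single edge. -/
def deleteEdge (H : NatHypergraph) (f : ℕ) : NatHypergraph where
  V := H.V
  E := H.E.erase f
  r := H.r
  s := H.s

/-- Delete an item: `Sum.inl v` is a vertex, `Sum.inr f` is an edge. -/
def deleteItem (H : NatHypergraph) : ℕ ⊕ ℕ → NatHypergraph
  | Sum.inl v => H.deleteVertex v
  | Sum.inr f => H.deleteEdge f

/-- Delete the items of a list one at a time, from the left. -/
def deleteList (H : NatHypergraph) (l : List (ℕ ⊕ ℕ)) : NatHypergraph :=
  l.foldl deleteItem H

/-- Range decomposition applied simultaneously to all edges: an edge `e`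
with at least two vertices in its range is replaced by the edges
`Nat.pair e (v+1)` for `v ∈ r e`, with range `{v}` and source `s e`;
all other edges are kept (renamed `Nat.pair e 0`). -/
def rangeDecomposeAll (H : NatHypergraph) : NatHypergraph where
  V := H.V
  E := H.E.biUnion (fun e =>
    if (H.r e).card ≤ 1 then {Nat.pair e 0}
    else (H.r e).image (fun v => Nat.pair e (v + 1)))
  r := fun n => if n.unpair.2 = 0 then H.r n.unpair.1 else {n.unpair.2 - 1}
  s := fun n => H.s n.unpair.1

end NatHypergraph

open NatHypergraph in
/-- If `f 0 … f (n-1)` is an easy cycle with range vertices `w i`, then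
the set `S = (E⁰ ∪ E¹) \ {f 0,…,f (n-1), w 0,…,w (n-1)}` is ideally
closed. -/
theorem easyCycle_complement_ideallyClosed (H : NatHypergraph) (hWF : H.WF)
    (n : ℕ) (f w : ℕ → ℕ) (hcyc : H.IsEasyCycle n f w) :
    H.IdeallyClosed (H.V \ (Finset.range n).image w)
      (H.E \ (Finset.range n).image f) := by
  obtain ⟨hn, hfE, hchain, _hc4, hr, hrin, _hsin⟩ := hcyc
  -- For each i < n, w i ∈ s (f ((i+1) % n))
  have hws : ∀ i < n, w i ∈ H.s (f ((i + 1) % n)) := by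
    intro i hi
    obtain ⟨x, hx⟩ := hchain i hi
    rw [Finset.mem_inter, hr i hi, Finset.mem_singleton] at hx
    exact hx.1 ▸ hx.2
  refine ⟨Finset.sdiff_subset, Finset.sdiff_subset, ?_, ?_, ?_⟩
  · intro e he v hv
    rw [Finset.mem_sdiff] at he
    obtain ⟨heE, henot⟩ := he
    rw [Finset.mem_sdiff]
    refine ⟨(hWF e heE).2.1 hv, ?_⟩
    intro hvim
    rw [Finset.mem_image] at hvim
    obtain ⟨i, hi, hwi⟩ := hvim
    rw [Finset.mem_range] at hi
    exact henot (Finset.mem_image.mpr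
      ⟨i, Finset.mem_range.mpr hi, (hrin i hi e heE (hwi ▸ hv)).symm⟩)
  · intro e heE hcond
    rw [Finset.mem_sdiff]
    refine ⟨heE, ?_⟩
    intro him
    rw [Finset.mem_image] at him
    obtain ⟨j, hj, hfj⟩ := him
    rw [Finset.mem_range] at hj
    rcases hcond with hs | ⟨_, hre⟩
    · -- w ((j+n-1)%n) ∈ s (f j) = s e, but it is excluded from SV
      have hin : (j + n - 1) % n < n := Nat.mod_lt _ hn
      have hij : ((j + n - 1) % n + 1) % n = j := by
        rw [Nat.mod_add_mod]
        have h1 : j + n - 1 + 1 = j + n := by omega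
        rw [h1, Nat.add_mod_right, Nat.mod_eq_of_lt hj]
      have hmem : w ((j + n - 1) % n) ∈ H.s e := by
        have := hws _ hin
        rw [hij, hfj] at this
        exact this
      have := hs hmem
      rw [Finset.mem_sdiff] at this
      exact this.2 (Finset.mem_image.mpr ⟨_, Finset.mem_range.mpr hin, rfl⟩)
    · have hwj : w j ∈ H.r e := by
        rw [← hfj, hr j hj]; exact Finset.mem_singleton_self _
      have := hre hwj
      rw [Finset.mem_sdiff] at this
      exact this.2 (Finset.mem_image.mpr ⟨j, Finset.mem_range.mpr hj, rfl⟩)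
  · intro v hv _hsink hall
    rw [Finset.mem_sdiff]
    refine ⟨hv, ?_⟩
    intro hvim
    rw [Finset.mem_image] at hvim
    obtain ⟨i, hi, hwi⟩ := hvim
    rw [Finset.mem_range] at hi
    have hin : (i + 1) % n < n := Nat.mod_lt _ hn
    have heE : f ((i + 1) % n) ∈ H.E := hfE _ hin
    have hmem : v ∈ H.s (f ((i + 1) % n)) := hwi ▸ hws i hi
    have := hall _ heE hmem
    rw [Finset.mem_sdiff] at this
    exact this.2 (Finset.mem_image.mpr ⟨_, Finset.mem_range.mpr hin, rfl⟩)
end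

section
/- Let HΓ be a normal finite hypergraph that contains no easy edge. Then for every edge e with nonempty range, either |s(e)| > 1, or there exist edges e_1,…,e_n with n ≥ 2 and e_n = e such that e_1…e_n is a path in HΓ and |s(e_1)| > 1 while |s(e_i)| = 1 for all 2 ≤ i ≤ n. -/
/-! Basic notions of (finite, directed) hypergraphs, following
Trieb–Weber-style hypergraph C*-algebra combinatorics. Vertices and edges
are labelled by natural numbers. -/

structure HypergraphTW where
  V : Finset ℕ
  E : Finset ℕ
  r : ℕ → Finset ℕ
  s : ℕ → Finset ℕ

namespace HypergraphTW

/-- Well-formedness: sources and ranges of edges consist of vertices,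
and every edge has a nonempty source. -/
def WF (H : HypergraphTW) : Prop :=
  ∀ e ∈ H.E, H.s e ⊆ H.V ∧ H.r e ⊆ H.V ∧ (H.s e).Nonempty

/-- A vertex is a sink if no edge has it in its source. -/
def IsSink (H : HypergraphTW) (v : ℕ) : Prop := ∀ e ∈ H.E, v ∉ H.s e

/-- A path is a nonempty list of edges such that the range of each edge
meets the source of the next one. -/
def IsPath (H : HypergraphTW) (l : List ℕ) : Prop :=
  l ≠ [] ∧ (∀ e ∈ l, e ∈ H.E) ∧
    List.Chain' (fun a b => (H.r a ∩ H.s b).Nonempty) l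

/-- There is a path starting with edge `e` and ending with edge `f`. -/
def PathTo (H : HypergraphTW) (e f : ℕ) : Prop :=
  ∃ l : List ℕ, H.IsPath l ∧ l.head? = some e ∧ l.getLast? = some f

/-- The set of edges from which there is a path ending with `f₀`
(the "easy edge set" when `f₀` is easy). -/
noncomputable def easySet (H : HypergraphTW) (f₀ : ℕ) : Finset ℕ :=
  @Finset.filter ℕ (fun e => H.PathTo e f₀) (fun _ => Classical.propDecidable _) H.E

/-- An edge `f₀` is easy if every edge from which there is a path to `f₀`
has exactly one vertex in its source and exactly one vertex in its range. -/
def IsEasyEdge (H : HypergraphTW) (f₀ : ℕ) : Prop :=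
  f₀ ∈ H.E ∧ ∀ f ∈ H.easySet f₀, (H.s f).card = 1 ∧ (H.r f).card = 1

/-- An easy cycle of length `n`, given by edges `f 0, …, f (n-1)` and
range vertices `w 0, …, w (n-1)` (indices taken mod `n`). -/
def IsEasyCycle (H : HypergraphTW) (n : ℕ) (f w : ℕ → ℕ) : Prop :=
  0 < n ∧ (∀ i < n, f i ∈ H.E) ∧
  (∀ i < n, (H.r (f i) ∩ H.s (f ((i + 1) % n))).Nonempty) ∧
  (∀ i < n, ∀ j < n, (H.r (f i) ∩ H.s (f j)).Nonempty → j = (i + 1) % n) ∧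
  (∀ i < n, H.r (f i) = {w i}) ∧
  (∀ i < n, ∀ e ∈ H.E, w i ∈ H.r e → e = f i) ∧
  (∀ i < n, ∀ e ∈ H.E, w i ∈ H.s e → e = f ((i + 1) % n))

/-- A simple quasisink: at most one outgoing edge, which must have empty
range, and at most one incoming edge. -/
def IsSimpleQuasisink (H : HypergraphTW) (w : ℕ) : Prop :=
  (∀ e ∈ H.E, ∀ f ∈ H.E, w ∈ H.s e → w ∈ H.s f → e = f) ∧
  (∀ e ∈ H.E, w ∈ H.s e → H.r e = ∅) ∧
  (∀ e ∈ H.E, ∀ f ∈ H.E, w ∈ H.r e → w ∈ H.r f → e = f)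

/-- Normality of a hypergraph. -/
def Normal (H : HypergraphTW) : Prop :=
  (∀ e ∈ H.E, (H.r e).card ≤ 1) ∧
  (∀ e ∈ H.E,
    (∃ f ∈ H.E, f ≠ e ∧ (H.s e ∩ H.s f).Nonempty) ∨
    ((H.r e).Nonempty ∧ H.r e ⊆ H.s e)) ∧
  (∀ e ∈ H.E, ∀ f ∈ H.E, e ≠ f → (H.s e ∩ H.s f).card = 1 →
    ((H.s e).card = 1 ∧ (H.s f).card = 1) ∨
    ∃ g ∈ H.E, g ≠ e ∧ (H.s e ∩ H.s f) ⊂ (H.s e ∩ H.s g))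

/-- A reduced hypergraph: normal, no easy edge, no easy cycle, and no
edge ending in a simple quasisink. -/
def Reduced (H : HypergraphTW) : Prop :=
  H.Normal ∧ (¬∃ f₀, H.IsEasyEdge f₀) ∧ (¬∃ n f w, H.IsEasyCycle n f w) ∧
  ¬∃ f ∈ H.E, ∃ w, H.r f = {w} ∧ H.IsSimpleQuasisink w

/-- A set of vertices `SV` and edges `SE` is ideally closed. -/
def IdeallyClosed (H : HypergraphTW) (SV SE : Finset ℕ) : Prop :=
  SV ⊆ H.V ∧ SE ⊆ H.E ∧
  (∀ e ∈ SE, H.r e ⊆ SV) ∧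
  (∀ e ∈ H.E, (H.s e ⊆ SV ∨ ((H.r e).Nonempty ∧ H.r e ⊆ SV)) → e ∈ SE) ∧
  (∀ v ∈ H.V, ¬H.IsSink v → (∀ e ∈ H.E, v ∈ H.s e → e ∈ SE) → v ∈ SV)

/-! ### The seven minor operations, as relations -/

def IsVertexDeletion (H H' : HypergraphTW) : Prop :=
  ∃ v ∈ H.V,
    H'.V = H.V.erase v ∧
    H'.E = H.E.filter (fun e => ¬ H.s e = {v}) ∧
    ∀ e ∈ H'.E, H'.r e = (H.r e).erase v ∧ H'.s e = (H.s e).erase v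

def IsEdgeDeletion (H H' : HypergraphTW) : Prop :=
  ∃ f ∈ H.E,
    H'.V = H.V ∧ H'.E = H.E.erase f ∧
    ∀ e ∈ H'.E, H'.r e = H.r e ∧ H'.s e = H.s e

def IsForwardContraction (H H' : HypergraphTW) : Prop :=
  ∃ f ∈ H.E, ∃ w,
    H.s f = {w} ∧
    (∀ e ∈ H.E, e ≠ f → ¬(H.s e ∩ H.s f).Nonempty) ∧
    (∀ e ∈ H.E, w ∈ H.r e → ¬(H.r e ∩ H.r f).Nonempty) ∧
    H'.V = H.V.erase w ∧ H'.E = H.E.erase f ∧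
    ∀ e ∈ H'.E,
      H'.s e = H.s e ∧
      H'.r e = (if w ∈ H.r e then (H.r e).erase w ∪ H.r f else H.r e)

def IsBackwardContractionAt (H H' : HypergraphTW) (f : ℕ) : Prop :=
  f ∈ H.E ∧ ∃ w,
    H.r f = {w} ∧
    (∀ e ∈ H.E, e ≠ f → ¬(H.s e ∩ H.s f).Nonempty) ∧
    (∀ e ∈ H.E, (H.r e ∩ H.s f).Nonempty → w ∉ H.r e) ∧
    H'.V = H.V.erase w ∧ H'.E = H.E.erase f ∧
    ∀ e ∈ H'.E,
      H'.r e = (if w ∈ H.r e then (H.r e).erase w ∪ H.s f else H.r e) ∧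
      H'.s e = (if w ∈ H.s e then (H.s e).erase w ∪ H.s f else H.s e)

def IsBackwardContraction (H H' : HypergraphTW) : Prop :=
  ∃ f, IsBackwardContractionAt H H' f

def IsEdgeCutting (H H' : HypergraphTW) : Prop :=
  ∃ f ∈ H.E,
    H'.V = H.V ∧ H'.E = H.E ∧
    (∀ e ∈ H.E, H'.s e = H.s e) ∧
    (∀ e ∈ H.E, e ≠ f → H'.r e = H.r e) ∧
    H'.r f = ∅

def IsSourceSeparation (H H' : HypergraphTW) : Prop :=
  ∃ (F : Finset ℕ) (w w' : ℕ),
    w ∈ H.V ∧ w' ∉ H.V ∧ F.Nonempty ∧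
    F ⊂ H.E.filter (fun e => w ∈ H.s e) ∧
    H'.V = insert w' H.V ∧ H'.E = H.E ∧
    ∀ e ∈ H.E,
      H'.r e = (if w ∈ H.r e then insert w' (H.r e) else H.r e) ∧
      H'.s e = (if e ∈ F then insert w' ((H.s e).erase w) else H.s e)

def IsRangeDecomposition (H H' : HypergraphTW) : Prop :=
  ∃ f ∈ H.E, ∃ ι : ℕ → ℕ,
    (H.r f).Nonempty ∧
    (∀ v ∈ H.r f, ι v ∉ H.E) ∧
    Set.InjOn ι (H.r f : Set ℕ) ∧
    H'.V = H.V ∧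
    H'.E = H.E.erase f ∪ (H.r f).image ι ∧
    (∀ e ∈ H.E.erase f, H'.r e = H.r e ∧ H'.s e = H.s e) ∧
    (∀ v ∈ H.r f, H'.r (ι v) = {v} ∧ H'.s (ι v) = H.s f)

/-- One application of a minor operation. -/
def MinorStep (H H' : HypergraphTW) : Prop :=
  IsVertexDeletion H H' ∨ IsEdgeDeletion H H' ∨ IsForwardContraction H H' ∨
  IsBackwardContraction H H' ∨ IsEdgeCutting H H' ∨ IsSourceSeparation H H' ∨
  IsRangeDecomposition H H'

/-- `IsMinor H' H` : the hypergraph `H'` is obtained from `H` by a finite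
combination of minor operations (`H' ≤ H`). -/
def IsMinor (H' H : HypergraphTW) : Prop := Relation.ReflTransGen MinorStep H H'

/-! ### The four forbidden minors (up to labelling) -/

def IsHGamma1 (H : HypergraphTW) : Prop :=
  ∃ v₁ v₂ v₃ e f : ℕ, v₁ ≠ v₂ ∧ v₁ ≠ v₃ ∧ v₂ ≠ v₃ ∧ e ≠ f ∧
    H.V = {v₁, v₂, v₃} ∧ H.E = {e, f} ∧
    H.s e = {v₁, v₂, v₃} ∧ H.s f = {v₁, v₂, v₃} ∧ H.r e = ∅ ∧ H.r f = ∅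

def IsHGamma2 (H : HypergraphTW) : Prop :=
  ∃ v₁ v₂ e f g : ℕ, v₁ ≠ v₂ ∧ e ≠ f ∧ e ≠ g ∧ f ≠ g ∧
    H.V = {v₁, v₂} ∧ H.E = {e, f, g} ∧
    H.s e = {v₁, v₂} ∧ H.s f = {v₁, v₂} ∧ H.s g = {v₁, v₂} ∧
    H.r e = ∅ ∧ H.r f = ∅ ∧ H.r g = ∅

def IsHGamma3 (H : HypergraphTW) : Prop :=
  ∃ v w e f : ℕ, v ≠ w ∧ e ≠ f ∧
    H.V = {v, w} ∧ H.E = {e, f} ∧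
    H.s e = {v, w} ∧ H.s f = {v, w} ∧ H.r e = ∅ ∧ H.r f = {w}

def IsHGamma4 (H : HypergraphTW) : Prop :=
  ∃ v₁ v₂ w e f : ℕ, v₁ ≠ v₂ ∧ v₁ ≠ w ∧ v₂ ≠ w ∧ e ≠ f ∧
    H.V = {v₁, v₂, w} ∧ H.E = {e, f} ∧
    H.s e = {v₁, v₂} ∧ H.s f = {v₁, v₂} ∧ H.r e = {w} ∧ H.r f = {w}

/-! ### Deletion of sets of vertices and edges -/

/-- Delete the vertices `SV` and edges `SE` (an edge whose source becomes
empty is removed as well). -/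
def deleteSet (H : HypergraphTW) (SV SE : Finset ℕ) : HypergraphTW where
  V := H.V \ SV
  E := (H.E \ SE).filter (fun e => ¬ H.s e ⊆ SV)
  r := fun e => H.r e \ SV
  s := fun e => H.s e \ SV

/-- Delete a single vertex. -/
def deleteVertex (H : HypergraphTW) (v : ℕ) : HypergraphTW where
  V := H.V.erase v
  E := H.E.filter (fun e => ¬ H.s e = {v})
  r := fun e => (H.r e).erase v
  s := fun e => (H.s e).erase v

/-- Delete a single edge. -/
def deleteEdge (H : HypergraphTW) (f : ℕ) : HypergraphTW where
  V := H.V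
  E := H.E.erase f
  r := H.r
  s := H.s

/-- Delete an item: `Sum.inl v` is a vertex, `Sum.inr f` is an edge. -/
def deleteItem (H : HypergraphTW) : ℕ ⊕ ℕ → HypergraphTW
  | Sum.inl v => H.deleteVertex v
  | Sum.inr f => H.deleteEdge f

/-- Delete the items of a list one at a time, from the left. -/
def deleteList (H : HypergraphTW) (l : List (ℕ ⊕ ℕ)) : HypergraphTW :=
  l.foldl deleteItem H

/-- Range decomposition applied simultaneously to all edges: an edge `e`
with at least two vertices in its range is replaced by the edges
`Nat.pair e (v+1)` for `v ∈ r e`, with range `{v}` and source `s e`;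
all other edges are kept (renamed `Nat.pair e 0`). -/
def rangeDecomposeAll (H : HypergraphTW) : HypergraphTW where
  V := H.V
  E := H.E.biUnion (fun e =>
    if (H.r e).card ≤ 1 then {Nat.pair e 0}
    else (H.r e).image (fun v => Nat.pair e (v + 1)))
  r := fun n => if n.unpair.2 = 0 then H.r n.unpair.1 else {n.unpair.2 - 1}
  s := fun n => H.s n.unpair.1

end HypergraphTW

open HypergraphTW in
lemma aux_path_split (H : HypergraphTW) (e : ℕ) :
    ∀ l : List ℕ, H.IsPath l → l.getLast? = some e →
      (∃ g ∈ l, 1 < (H.s g).card) → (∀ g ∈ l, (H.s g).Nonempty) →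
      1 < (H.s e).card ∨
      ∃ (e₁ : ℕ) (l' : List ℕ), l' ≠ [] ∧ H.IsPath (e₁ :: l') ∧
        (e₁ :: l').getLast (List.cons_ne_nil _ _) = e ∧
        1 < (H.s e₁).card ∧ ∀ g ∈ l', (H.s g).card = 1 := by
  intro l
  induction l with
  | nil => intro h; exact absurd rfl h.1
  | cons a t ih =>
    intro hp hlast hex hne
    cases t with
    | nil =>
      left
      simp at hlast
      obtain ⟨g, hg, hcard⟩ := hex
      simp at hg
      subst hg; subst hlast
      exact hcard
    | cons b t' =>
      have hpt : H.IsPath (b :: t') :=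
        ⟨by simp, fun g hg => hp.2.1 g (List.mem_cons_of_mem _ hg), hp.2.2.tail⟩
      have hlast' : (b :: t').getLast? = some e := by
        rw [List.getLast?_cons_cons] at hlast; exact hlast
      by_cases hcase : ∃ g ∈ b :: t', 1 < (H.s g).card
      · exact ih hpt hlast' hcase (fun g hg => hne g (List.mem_cons_of_mem _ hg))
      · push_neg at hcase
        have ha : 1 < (H.s a).card := by
          obtain ⟨g, hg, hc⟩ := hex
          rcases List.mem_cons.1 hg with rfl | hg
          · exact hc
          · exact absurd hc (not_lt.2 (hcase g hg))
        right
        refine ⟨a, b :: t', by simp, hp, ?_, ha, ?_⟩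
        · have h2 := List.getLast?_eq_getLast (l := a :: b :: t') (by simp)
          rw [h2] at hlast
          exact Option.some_injective _ hlast
        · intro g hg
          have h1 := hcase g hg
          have h2 := Finset.card_pos.2 (hne g (List.mem_cons_of_mem _ hg))
          omega

open HypergraphTW in
/-- In a normal hypergraph with no easy edge, every edge `e` with nonempty
range either has at least two vertices in its source, or is the endpoint of
a path `e₁ … eₙ` (n ≥ 2, eₙ = e) with `|s e₁| > 1` and `|s eᵢ| = 1` for all
`i ≥ 2`. -/
theorem normal_no_easy_edge_path_structure (H : HypergraphTW) (hWF : H.WF)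
    (hN : H.Normal) (hne : ¬∃ f₀, H.IsEasyEdge f₀) :
    ∀ e ∈ H.E, (H.r e).Nonempty →
      1 < (H.s e).card ∨
      ∃ (e₁ : ℕ) (l : List ℕ), l ≠ [] ∧ H.IsPath (e₁ :: l) ∧
        (e₁ :: l).getLast (List.cons_ne_nil _ _) = e ∧
        1 < (H.s e₁).card ∧ ∀ g ∈ l, (H.s g).card = 1 := by
  intro e he hre
  by_cases hse : 1 < (H.s e).card
  · exact Or.inl hse
  have hnee : ¬ H.IsEasyEdge e := fun h => hne ⟨e, h⟩
  rw [IsEasyEdge] at hnee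
  push_neg at hnee
  obtain ⟨f, hf, hfbad⟩ := hnee he
  simp only [easySet, Finset.mem_filter] at hf
  obtain ⟨hfE, l, hl, hhead, hlast⟩ := hf
  obtain ⟨a, t, rfl⟩ := List.exists_cons_of_ne_nil hl.1
  have haf : a = f := by simpa using hhead
  subst haf
  -- show 1 < (H.s a).card
  have hsf : 1 < (H.s a).card := by
    by_contra hsf
    have hsf1 : (H.s a).card = 1 := by
      have := Finset.card_pos.2 (hWF a hfE).2.2
      omega
    have hrf : (H.r a).card ≠ 1 := fun h => hfbad hsf1 h
    have hrf0 : H.r a = ∅ := by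
      have := hN.1 a hfE
      exact Finset.card_eq_zero.1 (by omega)
    cases t with
    | nil =>
      have : a = e := by simpa using hlast
      subst this
      exact absurd hrf0 (Finset.nonempty_iff_ne_empty.1 hre)
    | cons b t' =>
      have hch := hl.2.2
      rw [List.Chain', List.isChain_cons_cons] at hch
      obtain ⟨v, hv⟩ := hch.1
      rw [hrf0] at hv
      simp at hv
  have := aux_path_split H e (a :: t) hl hlast ⟨a, by simp, hsf⟩
    (fun g hg => (hWF g (hl.2.1 g hg)).2.2)
  rcases this with h | h
  · exact absurd h hse
  · exact Or.inr h
end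

section
/- Let HΓ be a finite hypergraph, let e, f be distinct edges with |s(e) ∩ s(f)| = 1, say s(e) ∩ s(f) = {w}, such that (|s(e)| > 1 or |s(f)| > 1) and there is no edge g ≠ e with s(e) ∩ s(f) ⊊ s(e) ∩ s(g). Let HΓ' be obtained from HΓ by source separation of {e} at w (introducing a new vertex w', replacing w by w' in s(e), and adding w' to r(g) for every edge g with w ∈ r(g)). Then the set of 'bad pairs' of HΓ' is strictly contained in the set of bad pairs of HΓ, where a bad pair of a hypergraph is an ordered pair (a,b) of distinct edges with |s(a) ∩ s(b)| = 1, not both sources singletons, and no edge g ≠ a with s(a) ∩ s(b) ⊊ s(a) ∩ s(g). In particular the number of bad pairs strictly decreases. -/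
namespace FinHypergraph

/-- The set of "bad pairs": ordered pairs of distinct edges violating
normality condition (3). -/
def badPairs (H : FinHypergraph) : Set (ℕ × ℕ) :=
  {p | p.1 ∈ H.E ∧ p.2 ∈ H.E ∧ p.1 ≠ p.2 ∧
    (H.s p.1 ∩ H.s p.2).card = 1 ∧
    ¬((H.s p.1).card = 1 ∧ (H.s p.2).card = 1) ∧
    ¬∃ g ∈ H.E, g ≠ p.1 ∧ (H.s p.1 ∩ H.s p.2) ⊂ (H.s p.1 ∩ H.s g)}

end FinHypergraph

open FinHypergraph in
/-- Source separation of `{e}` at the unique vertex `w` of `s e ∩ s f`,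
for a bad pair `(e, f)`, strictly decreases the set of bad pairs, and in
particular their number. -/
theorem sourceSeparation_badPairs_decrease (H : FinHypergraph) (hWF : H.WF)
    (e f w w' : ℕ) (he : e ∈ H.E) (hf : f ∈ H.E) (hef : e ≠ f)
    (hw : H.s e ∩ H.s f = {w})
    (hcard : ¬((H.s e).card = 1 ∧ (H.s f).card = 1))
    (hng : ¬∃ g ∈ H.E, g ≠ e ∧ (H.s e ∩ H.s f) ⊂ (H.s e ∩ H.s g))
    (hw' : w' ∉ H.V)
    (H' : FinHypergraph)
    (hV : H'.V = insert w' H.V) (hE : H'.E = H.E)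
    (hr : ∀ g, H'.r g = if w ∈ H.r g then insert w' (H.r g) else H.r g)
    (hs : ∀ g, H'.s g = if g = e then insert w' ((H.s g).erase w) else H.s g) :
    H'.badPairs ⊂ H.badPairs ∧ H'.badPairs.ncard < H.badPairs.ncard := by
  classical
  have hwe : w ∈ H.s e := by
    have : w ∈ H.s e ∩ H.s f := hw ▸ Finset.mem_singleton_self w
    exact (Finset.mem_inter.1 this).1
  have hw's : ∀ g ∈ H.E, w' ∉ H.s g := fun g hg hx => hw' ((hWF g hg).1 hx)
  have hIB : ∀ g ∈ H.E, g ≠ e → H'.s e ∩ H'.s g = (H.s e ∩ H.s g).erase w := by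
    intro g hg hge
    ext x
    rw [hs, hs, if_pos rfl, if_neg hge]
    simp only [Finset.mem_inter, Finset.mem_insert, Finset.mem_erase]
    constructor
    · rintro ⟨hx1 | ⟨hxw, hxe⟩, hx2⟩
      · exact absurd (hx1 ▸ hx2) (hw's g hg)
      · exact ⟨hxw, hxe, hx2⟩
    · rintro ⟨hxw, hxe, hxg⟩
      exact ⟨Or.inr ⟨hxw, hxe⟩, hxg⟩
  have hIB' : ∀ g ∈ H.E, g ≠ e → H'.s g ∩ H'.s e = (H.s g ∩ H.s e).erase w := by
    intro g hg hge
    rw [Finset.inter_comm, hIB g hg hge, Finset.inter_comm]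
  have hIA : ∀ g h : ℕ, g ≠ e → h ≠ e → H'.s g ∩ H'.s h = H.s g ∩ H.s h := by
    intro g h hg hh
    rw [hs, hs, if_neg hg, if_neg hh]
  have hng' : ∀ a ∈ H.E, a ≠ e → ∀ u, u ∈ H.s e → u ∈ H.s a → u ≠ w →
      w ∈ H.s a → False := by
    intro a ha hae u hue hua huw hwa
    refine hng ⟨a, ha, hae, ?_⟩
    rw [hw, Finset.ssubset_def]
    constructor
    · intro x hx
      rw [Finset.mem_singleton] at hx
      subst hx
      exact Finset.mem_inter.2 ⟨hwe, hwa⟩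
    · intro hsubset
      have := hsubset (Finset.mem_inter.2 ⟨hue, hua⟩)
      rw [Finset.mem_singleton] at this
      exact huw this
  have hcardE : (H'.s e).card = (H.s e).card := by
    rw [hs, if_pos rfl,
      Finset.card_insert_of_notMem (fun h => hw's e he (Finset.mem_erase.1 h).2),
      Finset.card_erase_add_one hwe]
  have hsub : H'.badPairs ⊆ H.badPairs := by
    rintro ⟨a, b⟩ ⟨ha, hb, hab, hcard1, hncard, hnoG⟩
    rw [hE] at ha hb
    dsimp only at *
    by_cases hae : a = e
    · -- case a = e (after subst, `e` becomes `a`)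
      subst hae
      have hbe : b ≠ a := fun h => hab h.symm
      rw [hIB b hb hbe] at hcard1
      have hwab : w ∉ H.s a ∩ H.s b := by
        intro hwm
        obtain ⟨u, hu⟩ := Finset.card_eq_one.1 hcard1
        have hum : u ∈ (H.s a ∩ H.s b).erase w := hu ▸ Finset.mem_singleton_self u
        obtain ⟨huw, hua, hub⟩ :=
          by simpa [Finset.mem_erase, Finset.mem_inter] using hum
        exact hng' b hb hbe u hua hub huw (Finset.mem_inter.1 hwm).2
      rw [Finset.erase_eq_of_notMem hwab] at hcard1
      refine ⟨ha, hb, hab, hcard1, ?_, ?_⟩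
      · intro ⟨h1, h2⟩
        exact hncard ⟨hcardE.trans h1, by rw [hs, if_neg hbe]; exact h2⟩
      · rintro ⟨g, hg, hga, hss⟩
        by_cases hwg : w ∈ H.s a ∩ H.s g
        · obtain ⟨u, hu, huw⟩ := Finset.exists_mem_ne
            (show 1 < (H.s a ∩ H.s g).card by
              rw [← hcard1]; exact Finset.card_lt_card hss) w
          exact hng' g hg hga u (Finset.mem_inter.1 hu).1 (Finset.mem_inter.1 hu).2
            huw (Finset.mem_inter.1 hwg).2
        · refine hnoG ⟨g, hE ▸ hg, hga, ?_⟩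
          rw [hIB g hg hga, hIB b hb hbe, Finset.erase_eq_of_notMem hwab,
            Finset.erase_eq_of_notMem hwg]
          exact hss
    · by_cases hbe : b = e
      · -- case b = e (after subst, `e` becomes `b`)
        subst hbe
        rw [hIB' a ha hae] at hcard1
        have hwab : w ∉ H.s a ∩ H.s b := by
          intro hwm
          obtain ⟨u, hu⟩ := Finset.card_eq_one.1 hcard1
          have hum : u ∈ (H.s a ∩ H.s b).erase w := hu ▸ Finset.mem_singleton_self u
          obtain ⟨huw, hua, hub⟩ :=
            by simpa [Finset.mem_erase, Finset.mem_inter] using hum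
          exact hng' a ha hae u hub hua huw (Finset.mem_inter.1 hwm).1
        rw [Finset.erase_eq_of_notMem hwab] at hcard1
        refine ⟨ha, hb, hab, hcard1, ?_, ?_⟩
        · intro ⟨h1, h2⟩
          exact hncard ⟨by rw [hs, if_neg hae]; exact h1, hcardE.trans h2⟩
        · rintro ⟨g, hg, hga, hss⟩
          by_cases hge : g = b
          · subst hge
            rw [Finset.ssubset_def] at hss
            exact hss.2 hss.1
          · refine hnoG ⟨g, hE ▸ hg, hga, ?_⟩
            rw [hIA a g hae hge, hIB' a ha hae, Finset.erase_eq_of_notMem hwab]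
            exact hss
      · -- case a ≠ e, b ≠ e
        rw [hIA a b hae hbe] at hcard1
        refine ⟨ha, hb, hab, hcard1, ?_, ?_⟩
        · intro ⟨h1, h2⟩
          exact hncard ⟨by rw [hs, if_neg hae]; exact h1,
            by rw [hs, if_neg hbe]; exact h2⟩
        · rintro ⟨g, hg, hga, hss⟩
          by_cases hge : g = e
          · -- g = e (after subst, `e` becomes `g`)
            subst hge
            by_cases hwg : w ∈ H.s a ∩ H.s g
            · obtain ⟨u, hu, huw⟩ := Finset.exists_mem_ne
                (show 1 < (H.s a ∩ H.s g).card by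
              rw [← hcard1]; exact Finset.card_lt_card hss) w
              exact hng' a ha hae u (Finset.mem_inter.1 hu).2
                (Finset.mem_inter.1 hu).1 huw (Finset.mem_inter.1 hwg).1
            · refine hnoG ⟨g, hE ▸ hg, hga, ?_⟩
              rw [hIA a b hae hbe, hIB' a ha hae, Finset.erase_eq_of_notMem hwg]
              exact hss
          · refine hnoG ⟨g, hE ▸ hg, hga, ?_⟩
            rw [hIA a b hae hbe, hIA a g hae hge]
            exact hss
  have hefH : (e, f) ∈ H.badPairs := ⟨he, hf, hef, by rw [hw]; simp, hcard, hng⟩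
  have hefH' : (e, f) ∉ H'.badPairs := by
    rintro ⟨-, -, -, hc1, -, -⟩
    dsimp only at hc1
    rw [hIB f hf (fun h => hef h.symm), hw, Finset.erase_singleton] at hc1
    simp at hc1
  have hssub : H'.badPairs ⊂ H.badPairs :=
    ⟨hsub, fun h => hefH' (h hefH)⟩
  refine ⟨hssub, ?_⟩
  have hfin : H.badPairs.Finite := by
    apply Set.Finite.subset (Set.Finite.prod H.E.finite_toSet H.E.finite_toSet)
    rintro ⟨a, b⟩ ⟨ha, hb, -⟩
    exact ⟨ha, hb⟩
  exact Set.ncard_lt_ncard hssub hfin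
end

section
/- Let HΓ be a normal finite hypergraph and f_1…f_n a path with |s(f_i)| = 1 for all i ≥ 2. Then the hypergraph HΔ with the same vertices, edge set E^1(HΓ) \ {f_2,…,f_n}, unchanged sources, and ranges given by r_HΔ(e) = r_HΓ(e) for e ≠ f_1 and r_HΔ(f_1) = r_HΓ(f_n), is a hypergraph minor of HΓ. -/
/-! Basic notions of (finite, directed) hypergraphs, following
Trieb–Weber-style hypergraph C*-algebra combinatorics. Vertices and edges
are labelled by natural numbers. -/

structure HyperGraph where
  V : Finset ℕ
  E : Finset ℕ
  r : ℕ → Finset ℕ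
  s : ℕ → Finset ℕ

namespace HyperGraph

/-- Well-formedness: sources and ranges of edges consist of vertices,
and every edge has a nonempty source. -/
def WF (H : HyperGraph) : Prop :=
  ∀ e ∈ H.E, H.s e ⊆ H.V ∧ H.r e ⊆ H.V ∧ (H.s e).Nonempty

/-- A vertex is a sink if no edge has it in its source. -/
def IsSink (H : HyperGraph) (v : ℕ) : Prop := ∀ e ∈ H.E, v ∉ H.s e

/-- A path is a nonempty list of edges such that the range of each edge
meets the source of the next one. -/
def IsPath (H : HyperGraph) (l : List ℕ) : Prop :=
  l ≠ [] ∧ (∀ e ∈ l, e ∈ H.E) ∧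
    List.Chain' (fun a b => (H.r a ∩ H.s b).Nonempty) l

/-- There is a path starting with edge `e` and ending with edge `f`. -/
def PathTo (H : HyperGraph) (e f : ℕ) : Prop :=
  ∃ l : List ℕ, H.IsPath l ∧ l.head? = some e ∧ l.getLast? = some f

/-- The set of edges from which there is a path ending with `f₀`
(the "easy edge set" when `f₀` is easy). -/
noncomputable def easySet (H : HyperGraph) (f₀ : ℕ) : Finset ℕ :=
  @Finset.filter ℕ (fun e => H.PathTo e f₀) (fun _ => Classical.propDecidable _) H.E

/-- An edge `f₀` is easy if every edge from which there is a path to `f₀`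
has exactly one vertex in its source and exactly one vertex in its range. -/
def IsEasyEdge (H : HyperGraph) (f₀ : ℕ) : Prop :=
  f₀ ∈ H.E ∧ ∀ f ∈ H.easySet f₀, (H.s f).card = 1 ∧ (H.r f).card = 1

/-- An easy cycle of length `n`, given by edges `f 0, …, f (n-1)` and
range vertices `w 0, …, w (n-1)` (indices taken mod `n`). -/
def IsEasyCycle (H : HyperGraph) (n : ℕ) (f w : ℕ → ℕ) : Prop :=
  0 < n ∧ (∀ i < n, f i ∈ H.E) ∧
  (∀ i < n, (H.r (f i) ∩ H.s (f ((i + 1) % n))).Nonempty) ∧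
  (∀ i < n, ∀ j < n, (H.r (f i) ∩ H.s (f j)).Nonempty → j = (i + 1) % n) ∧
  (∀ i < n, H.r (f i) = {w i}) ∧
  (∀ i < n, ∀ e ∈ H.E, w i ∈ H.r e → e = f i) ∧
  (∀ i < n, ∀ e ∈ H.E, w i ∈ H.s e → e = f ((i + 1) % n))

/-- A simple quasisink: at most one outgoing edge, which must have empty
range, and at most one incoming edge. -/
def IsSimpleQuasisink (H : HyperGraph) (w : ℕ) : Prop :=
  (∀ e ∈ H.E, ∀ f ∈ H.E, w ∈ H.s e → w ∈ H.s f → e = f) ∧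
  (∀ e ∈ H.E, w ∈ H.s e → H.r e = ∅) ∧
  (∀ e ∈ H.E, ∀ f ∈ H.E, w ∈ H.r e → w ∈ H.r f → e = f)

/-- Normality of a hypergraph. -/
def Normal (H : HyperGraph) : Prop :=
  (∀ e ∈ H.E, (H.r e).card ≤ 1) ∧
  (∀ e ∈ H.E,
    (∃ f ∈ H.E, f ≠ e ∧ (H.s e ∩ H.s f).Nonempty) ∨
    ((H.r e).Nonempty ∧ H.r e ⊆ H.s e)) ∧
  (∀ e ∈ H.E, ∀ f ∈ H.E, e ≠ f → (H.s e ∩ H.s f).card = 1 →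
    ((H.s e).card = 1 ∧ (H.s f).card = 1) ∨
    ∃ g ∈ H.E, g ≠ e ∧ (H.s e ∩ H.s f) ⊂ (H.s e ∩ H.s g))

/-- A reduced hypergraph: normal, no easy edge, no easy cycle, and no
edge ending in a simple quasisink. -/
def Reduced (H : HyperGraph) : Prop :=
  H.Normal ∧ (¬∃ f₀, H.IsEasyEdge f₀) ∧ (¬∃ n f w, H.IsEasyCycle n f w) ∧
  ¬∃ f ∈ H.E, ∃ w, H.r f = {w} ∧ H.IsSimpleQuasisink w

/-- A set of vertices `SV` and edges `SE` is ideally closed. -/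
def IdeallyClosed (H : HyperGraph) (SV SE : Finset ℕ) : Prop :=
  SV ⊆ H.V ∧ SE ⊆ H.E ∧
  (∀ e ∈ SE, H.r e ⊆ SV) ∧
  (∀ e ∈ H.E, (H.s e ⊆ SV ∨ ((H.r e).Nonempty ∧ H.r e ⊆ SV)) → e ∈ SE) ∧
  (∀ v ∈ H.V, ¬H.IsSink v → (∀ e ∈ H.E, v ∈ H.s e → e ∈ SE) → v ∈ SV)

/-! ### The seven minor operations, as relations -/

def IsVertexDeletion (H H' : HyperGraph) : Prop :=
  ∃ v ∈ H.V,
    H'.V = H.V.erase v ∧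
    H'.E = H.E.filter (fun e => ¬ H.s e = {v}) ∧
    ∀ e ∈ H'.E, H'.r e = (H.r e).erase v ∧ H'.s e = (H.s e).erase v

def IsEdgeDeletion (H H' : HyperGraph) : Prop :=
  ∃ f ∈ H.E,
    H'.V = H.V ∧ H'.E = H.E.erase f ∧
    ∀ e ∈ H'.E, H'.r e = H.r e ∧ H'.s e = H.s e

def IsForwardContraction (H H' : HyperGraph) : Prop :=
  ∃ f ∈ H.E, ∃ w,
    H.s f = {w} ∧
    (∀ e ∈ H.E, e ≠ f → ¬(H.s e ∩ H.s f).Nonempty) ∧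
    (∀ e ∈ H.E, w ∈ H.r e → ¬(H.r e ∩ H.r f).Nonempty) ∧
    H'.V = H.V.erase w ∧ H'.E = H.E.erase f ∧
    ∀ e ∈ H'.E,
      H'.s e = H.s e ∧
      H'.r e = (if w ∈ H.r e then (H.r e).erase w ∪ H.r f else H.r e)

def IsBackwardContractionAt (H H' : HyperGraph) (f : ℕ) : Prop :=
  f ∈ H.E ∧ ∃ w,
    H.r f = {w} ∧
    (∀ e ∈ H.E, e ≠ f → ¬(H.s e ∩ H.s f).Nonempty) ∧
    (∀ e ∈ H.E, (H.r e ∩ H.s f).Nonempty → w ∉ H.r e) ∧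
    H'.V = H.V.erase w ∧ H'.E = H.E.erase f ∧
    ∀ e ∈ H'.E,
      H'.r e = (if w ∈ H.r e then (H.r e).erase w ∪ H.s f else H.r e) ∧
      H'.s e = (if w ∈ H.s e then (H.s e).erase w ∪ H.s f else H.s e)

def IsBackwardContraction (H H' : HyperGraph) : Prop :=
  ∃ f, IsBackwardContractionAt H H' f

def IsEdgeCutting (H H' : HyperGraph) : Prop :=
  ∃ f ∈ H.E,
    H'.V = H.V ∧ H'.E = H.E ∧
    (∀ e ∈ H.E, H'.s e = H.s e) ∧
    (∀ e ∈ H.E, e ≠ f → H'.r e = H.r e) ∧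
    H'.r f = ∅

def IsSourceSeparation (H H' : HyperGraph) : Prop :=
  ∃ (F : Finset ℕ) (w w' : ℕ),
    w ∈ H.V ∧ w' ∉ H.V ∧ F.Nonempty ∧
    F ⊂ H.E.filter (fun e => w ∈ H.s e) ∧
    H'.V = insert w' H.V ∧ H'.E = H.E ∧
    ∀ e ∈ H.E,
      H'.r e = (if w ∈ H.r e then insert w' (H.r e) else H.r e) ∧
      H'.s e = (if e ∈ F then insert w' ((H.s e).erase w) else H.s e)

def IsRangeDecomposition (H H' : HyperGraph) : Prop :=
  ∃ f ∈ H.E, ∃ ι : ℕ → ℕ,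
    (H.r f).Nonempty ∧
    (∀ v ∈ H.r f, ι v ∉ H.E) ∧
    Set.InjOn ι (H.r f : Set ℕ) ∧
    H'.V = H.V ∧
    H'.E = H.E.erase f ∪ (H.r f).image ι ∧
    (∀ e ∈ H.E.erase f, H'.r e = H.r e ∧ H'.s e = H.s e) ∧
    (∀ v ∈ H.r f, H'.r (ι v) = {v} ∧ H'.s (ι v) = H.s f)

/-- One application of a minor operation. -/
def MinorStep (H H' : HyperGraph) : Prop :=
  IsVertexDeletion H H' ∨ IsEdgeDeletion H H' ∨ IsForwardContraction H H' ∨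
  IsBackwardContraction H H' ∨ IsEdgeCutting H H' ∨ IsSourceSeparation H H' ∨
  IsRangeDecomposition H H'

/-- `IsMinor H' H` : the hypergraph `H'` is obtained from `H` by a finite
combination of minor operations (`H' ≤ H`). -/
def IsMinor (H' H : HyperGraph) : Prop := Relation.ReflTransGen MinorStep H H'

/-! ### The four forbidden minors (up to labelling) -/

def IsHGamma1 (H : HyperGraph) : Prop :=
  ∃ v₁ v₂ v₃ e f : ℕ, v₁ ≠ v₂ ∧ v₁ ≠ v₃ ∧ v₂ ≠ v₃ ∧ e ≠ f ∧
    H.V = {v₁, v₂, v₃} ∧ H.E = {e, f} ∧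
    H.s e = {v₁, v₂, v₃} ∧ H.s f = {v₁, v₂, v₃} ∧ H.r e = ∅ ∧ H.r f = ∅

def IsHGamma2 (H : HyperGraph) : Prop :=
  ∃ v₁ v₂ e f g : ℕ, v₁ ≠ v₂ ∧ e ≠ f ∧ e ≠ g ∧ f ≠ g ∧
    H.V = {v₁, v₂} ∧ H.E = {e, f, g} ∧
    H.s e = {v₁, v₂} ∧ H.s f = {v₁, v₂} ∧ H.s g = {v₁, v₂} ∧
    H.r e = ∅ ∧ H.r f = ∅ ∧ H.r g = ∅

def IsHGamma3 (H : HyperGraph) : Prop :=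
  ∃ v w e f : ℕ, v ≠ w ∧ e ≠ f ∧
    H.V = {v, w} ∧ H.E = {e, f} ∧
    H.s e = {v, w} ∧ H.s f = {v, w} ∧ H.r e = ∅ ∧ H.r f = {w}

def IsHGamma4 (H : HyperGraph) : Prop :=
  ∃ v₁ v₂ w e f : ℕ, v₁ ≠ v₂ ∧ v₁ ≠ w ∧ v₂ ≠ w ∧ e ≠ f ∧
    H.V = {v₁, v₂, w} ∧ H.E = {e, f} ∧
    H.s e = {v₁, v₂} ∧ H.s f = {v₁, v₂} ∧ H.r e = {w} ∧ H.r f = {w}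

/-! ### Deletion of sets of vertices and edges -/

/-- Delete the vertices `SV` and edges `SE` (an edge whose source becomes
empty is removed as well). -/
def deleteSet (H : HyperGraph) (SV SE : Finset ℕ) : HyperGraph where
  V := H.V \ SV
  E := (H.E \ SE).filter (fun e => ¬ H.s e ⊆ SV)
  r := fun e => H.r e \ SV
  s := fun e => H.s e \ SV

/-- Delete a single vertex. -/
def deleteVertex (H : HyperGraph) (v : ℕ) : HyperGraph where
  V := H.V.erase v
  E := H.E.filter (fun e => ¬ H.s e = {v})
  r := fun e => (H.r e).erase v
  s := fun e => (H.s e).erase v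

/-- Delete a single edge. -/
def deleteEdge (H : HyperGraph) (f : ℕ) : HyperGraph where
  V := H.V
  E := H.E.erase f
  r := H.r
  s := H.s

/-- Delete an item: `Sum.inl v` is a vertex, `Sum.inr f` is an edge. -/
def deleteItem (H : HyperGraph) : ℕ ⊕ ℕ → HyperGraph
  | Sum.inl v => H.deleteVertex v
  | Sum.inr f => H.deleteEdge f

/-- Delete the items of a list one at a time, from the left. -/
def deleteList (H : HyperGraph) (l : List (ℕ ⊕ ℕ)) : HyperGraph :=
  l.foldl deleteItem H

/-- Range decomposition applied simultaneously to all edges: an edge `e`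
with at least two vertices in its range is replaced by the edges
`Nat.pair e (v+1)` for `v ∈ r e`, with range `{v}` and source `s e`;
all other edges are kept (renamed `Nat.pair e 0`). -/
def rangeDecomposeAll (H : HyperGraph) : HyperGraph where
  V := H.V
  E := H.E.biUnion (fun e =>
    if (H.r e).card ≤ 1 then {Nat.pair e 0}
    else (H.r e).image (fun v => Nat.pair e (v + 1)))
  r := fun n => if n.unpair.2 = 0 then H.r n.unpair.1 else {n.unpair.2 - 1}
  s := fun n => H.s n.unpair.1


/-! ### Auxiliary lemmas for path contraction -/

section PathContractionAux

open Finset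

lemma isMinor_refl (H : HyperGraph) : IsMinor H H := Relation.ReflTransGen.refl

lemma isMinor_trans {H1 H2 H3 : HyperGraph} (h12 : IsMinor H1 H2) (h23 : IsMinor H2 H3) :
    IsMinor H1 H3 := Relation.ReflTransGen.trans h23 h12

lemma minor_deleteEdge (H : HyperGraph) {f : ℕ} (hf : f ∈ H.E) :
    IsMinor (H.deleteEdge f) H :=
  Relation.ReflTransGen.single (Or.inr (Or.inl ⟨f, hf, rfl, rfl, fun _ _ => ⟨rfl, rfl⟩⟩))

lemma minor_sdiff (H : HyperGraph) (S : Finset ℕ) :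
    IsMinor ⟨H.V, H.E \ S, H.r, H.s⟩ H := by
  classical
  induction S using Finset.induction_on with
  | empty => rw [Finset.sdiff_empty]; exact isMinor_refl H
  | @insert a S ha ih =>
    rw [Finset.sdiff_insert]
    by_cases hmem : a ∈ H.E \ S
    · exact isMinor_trans (minor_deleteEdge ⟨H.V, H.E \ S, H.r, H.s⟩ hmem) ih
    · rw [Finset.erase_eq_of_notMem hmem]; exact ih

lemma minor_cut (H : HyperGraph) {f : ℕ} (hf : f ∈ H.E) :
    IsMinor ⟨H.V, H.E, fun n => if n = f then ∅ else H.r n, H.s⟩ H :=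
  Relation.ReflTransGen.single (Or.inr (Or.inr (Or.inr (Or.inr (Or.inl
    ⟨f, hf, rfl, rfl, fun _ _ => rfl, fun _ _ hne => if_neg hne, if_pos rfl⟩)))))

end PathContractionAux

section Retarget

lemma minor_retarget (H : HyperGraph) {e y : ℕ} (he : e ∈ H.E) (hy : y ∈ H.r e) :
    IsMinor ⟨H.V, H.E, fun n => if n = e then {y} else H.r n, H.s⟩ H := by
  classical
  set N := H.E.sup id + 1 with hNdef
  have hfresh : ∀ a ∈ H.E, a < N := fun a ha =>
    Nat.lt_succ_of_le (Finset.le_sup (f := id) ha)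
  set H1 : HyperGraph :=
    ⟨H.V, H.E.erase e ∪ (H.r e).image (fun v => N + v),
     fun n => if N ≤ n then {n - N} else H.r n,
     fun n => if N ≤ n then H.s e else H.s n⟩ with hH1
  have step1 : MinorStep H H1 := by
    refine Or.inr (Or.inr (Or.inr (Or.inr (Or.inr (Or.inr
      ⟨e, he, fun v => N + v, ⟨y, hy⟩, ?_, ?_, rfl, rfl, ?_, ?_⟩)))))
    · intro v _ hmem
      have hmem' : N + v ∈ H.E := hmem
      have := hfresh _ hmem'
      omega
    · intro a _ b _ hab
      have hab' : N + a = N + b := hab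
      omega
    · intro a ha
      have hne : ¬ N ≤ a := by have := hfresh a (Finset.mem_of_mem_erase ha); omega
      exact ⟨if_neg hne, if_neg hne⟩
    · intro v _
      refine ⟨?_, if_pos (Nat.le_add_right N v)⟩
      show (if N ≤ N + v then ({N + v - N} : Finset ℕ) else H.r (N + v)) = {v}
      rw [if_pos (Nat.le_add_right N v), Nat.add_sub_cancel_left]
  have h2eq : H1.E \ ((H.r e).erase y).image (fun v => N + v)
      = H.E.erase e ∪ {N + y} := by
    ext n
    simp only [hH1, Finset.mem_sdiff, Finset.mem_union, Finset.mem_image,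
      Finset.mem_erase, Finset.mem_singleton]
    constructor
    · rintro ⟨h1 | ⟨v, hv, rfl⟩, h2⟩
      · exact Or.inl h1
      · rcases eq_or_ne v y with rfl | hvy
        · exact Or.inr rfl
        · exact absurd ⟨v, ⟨hvy, hv⟩, rfl⟩ h2
    · rintro (⟨hne, hn⟩ | rfl)
      · refine ⟨Or.inl ⟨hne, hn⟩, ?_⟩
        rintro ⟨v, hv, hEq⟩
        have := hfresh n hn; omega
    
      · refine ⟨Or.inr ⟨y, hy, rfl⟩, ?_⟩
        rintro ⟨v, ⟨hvy, hv⟩, hEq⟩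
        exact hvy (by omega)
  have step2 := minor_sdiff H1 (((H.r e).erase y).image (fun v => N + v))
  rw [h2eq] at step2
  have hr2 : H1.r (N + y) = {y} := by
    show (if N ≤ N + y then ({N + y - N} : Finset ℕ) else H.r (N + y)) = {y}
    rw [if_pos (Nat.le_add_right N y), Nat.add_sub_cancel_left]
  set H2 : HyperGraph := ⟨H1.V, H.E.erase e ∪ {N + y}, H1.r, H1.s⟩ with hH2
  have hmemc : N + y ∈ H2.E := Finset.mem_union_right _ (Finset.mem_singleton_self _)
  have step3 : MinorStep H2 ⟨H.V, H.E, fun n => if n = e then {y} else H.r n, H.s⟩ := by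
    refine Or.inr (Or.inr (Or.inr (Or.inr (Or.inr (Or.inr
      ⟨N + y, hmemc, fun _ => e, ?_, ?_, ?_, rfl, ?_, ?_, ?_⟩)))))
    · show (H1.r (N + y)).Nonempty
      rw [hr2]; exact Finset.singleton_nonempty y
    · intro v _ hmem
      have hmem' : e ∈ H2.E := hmem
      rcases Finset.mem_union.mp hmem' with h | h
      · exact Finset.notMem_erase e _ h
      · have h1 := hfresh e he
        have h2 : e = N + y := Finset.mem_singleton.mp h
        omega
    · intro a ha b hb _
      have ha' : a = y := by
        have : a ∈ H1.r (N + y) := ha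
        rw [hr2] at this; exact Finset.mem_singleton.mp this
      have hb' : b = y := by
        have : b ∈ H1.r (N + y) := hb
        rw [hr2] at this; exact Finset.mem_singleton.mp this
      rw [ha', hb']
    · show H.E = H2.E.erase (N + y) ∪ (H1.r (N + y)).image (fun _ => e)
      rw [hr2, Finset.image_singleton]
      ext n
      simp only [hH2, Finset.mem_union, Finset.mem_erase, Finset.mem_singleton]
      constructor
      · intro hn
        rcases eq_or_ne n e with rfl | hne
        · exact Or.inr rfl
        · have := hfresh n hn
          exact Or.inl ⟨by omega, Or.inl ⟨hne, hn⟩⟩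
      · rintro (⟨hne, ⟨_, hn⟩ | rfl⟩ | rfl)
        · exact hn
        · exact absurd rfl hne
        · exact he
    · intro a ha
      obtain ⟨hane, ha2⟩ := Finset.mem_erase.mp ha
      rcases Finset.mem_union.mp ha2 with h | h
      · obtain ⟨hae, haE⟩ := Finset.mem_erase.mp h
        have hlt : ¬ N ≤ a := by have := hfresh a haE; omega
        constructor
        · show (if a = e then ({y} : Finset ℕ) else H.r a) = H1.r a
          rw [if_neg hae]
          show H.r a = (if N ≤ a then ({a - N} : Finset ℕ) else H.r a)
          rw [if_neg hlt]
        · show H.s a = (if N ≤ a then H.s e else H.s a)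
          rw [if_neg hlt]
      · exact absurd (Finset.mem_singleton.mp h) hane
    · intro v hv
      have hv' : v = y := by
        have : v ∈ H1.r (N + y) := hv
        rw [hr2] at this; exact Finset.mem_singleton.mp this
      rw [hv']
      constructor
      · show (if e = e then ({y} : Finset ℕ) else H.r e) = {y}
        rw [if_pos rfl]
      · show H.s e = (if N ≤ N + y then H.s e else H.s (N + y))
        rw [if_pos (Nat.le_add_right N y)]
  exact isMinor_trans (isMinor_trans (Relation.ReflTransGen.single step3) step2)
    (Relation.ReflTransGen.single step1)

end Retarget

section RetargetMany

lemma minor_retarget_many (S : Finset ℕ) :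
    ∀ (H : HyperGraph) (ρ : ℕ → Finset ℕ), S ⊆ H.E →
      (∀ n ∈ S, ∃ y ∈ H.r n, ρ n = {y}) →
      (∀ n, n ∉ S → ρ n = H.r n) →
      IsMinor ⟨H.V, H.E, ρ, H.s⟩ H := by
  classical
  induction S using Finset.induction_on with
  | empty =>
    intro H ρ _ _ hout
    have hρ : ρ = H.r := funext fun n => hout n (Finset.notMem_empty n)
    rw [hρ]
    exact isMinor_refl H
  | @insert a S ha ih =>
    intro H ρ hsub hin hout
    have haE : a ∈ H.E := hsub (Finset.mem_insert_self a S)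
    obtain ⟨y, hy, hρa⟩ := hin a (Finset.mem_insert_self a S)
    have step := minor_retarget H haE hy
    set H1 : HyperGraph := ⟨H.V, H.E, fun n => if n = a then {y} else H.r n, H.s⟩ with hH1
    have ihi : IsMinor ⟨H1.V, H1.E, ρ, H1.s⟩ H1 := by
      apply ih H1 ρ
      · intro n hn; exact hsub (Finset.mem_insert_of_mem hn)
      · intro n hn
        have hne : n ≠ a := fun h => ha (h ▸ hn)
        obtain ⟨z, hz, hρz⟩ := hin n (Finset.mem_insert_of_mem hn)
        refine ⟨z, ?_, hρz⟩
        show z ∈ (if n = a then ({y} : Finset ℕ) else H.r n)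
        rw [if_neg hne]; exact hz
      · intro n hn
        show ρ n = (if n = a then ({y} : Finset ℕ) else H.r n)
        by_cases hna : n = a
        · subst hna; rw [if_pos rfl]; exact hρa
        · rw [if_neg hna]
          exact hout n (fun h => (Finset.mem_insert.mp h).elim hna hn)
    exact isMinor_trans ihi step

end RetargetMany

section StepLemma

lemma step_lemma (K : HyperGraph) (f₁ g w : ℕ)
    (hg : g ∈ K.E) (hf₁ : f₁ ∈ K.E) (hne : f₁ ≠ g)
    (hsg : K.s g = {w})
    (hA1s : ∀ e ∈ K.E, K.s e ⊆ K.V) (hA1r : ∀ e ∈ K.E, K.r e ⊆ K.V)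
    (h3 : ∀ e ∈ K.E, w ∈ K.r e → K.r e = {w})
    (h4 : w ∈ K.r f₁)
    (hcard : (K.r g).card ≤ 1)
    (h6 : w ∈ K.r g ∨ ∃ f ∈ K.E, f ≠ g ∧ w ∈ K.s f) :
    IsMinor ⟨K.V, K.E.erase g, fun n => if n = f₁ then K.r g else K.r n, K.s⟩ K := by
  classical
  by_cases hwg : w ∈ K.r g
  · -- case A: r g = {w} = r f₁; deletion suffices
    have hrg : K.r g = {w} := h3 g hg hwg
    have hrf : K.r f₁ = {w} := h3 f₁ hf₁ h4
    have hfun : (fun n => if n = f₁ then K.r g else K.r n) = K.r := by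
      funext n; by_cases hn : n = f₁
      · subst hn; rw [if_pos rfl, hrg, hrf]
      · rw [if_neg hn]
    rw [hfun]
    exact minor_deleteEdge K hg
  · -- case B
    have hwV : w ∈ K.V := hA1s g hg (hsg ▸ Finset.mem_singleton_self w)
    obtain ⟨f, hfE, hfg, hwf⟩ := h6.resolve_left hwg
    set u := K.V.sup id + 1 with hu
    have hufresh : ∀ a ∈ K.V, a < u :=
      fun a ha => Nat.lt_succ_of_le (Finset.le_sup (f := id) ha)
    have huV : u ∉ K.V := fun h => by have := hufresh u h; omega
    set H1 : HyperGraph := ⟨insert u K.V, K.E,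
      fun n => if w ∈ K.r n then insert u (K.r n) else K.r n,
      fun n => if n = g then {u} else K.s n⟩ with hH1
    have step1 : MinorStep K H1 := by
      refine Or.inr (Or.inr (Or.inr (Or.inr (Or.inr (Or.inl
        ⟨{g}, w, u, hwV, huV, Finset.singleton_nonempty g, ?_, rfl, rfl, ?_⟩)))))
      · rw [Finset.ssubset_def]
        constructor
        · intro x hx
          rw [Finset.mem_singleton] at hx; subst hx
          exact Finset.mem_filter.mpr ⟨hg, hsg ▸ Finset.mem_singleton_self w⟩
        · intro hsub
          have := hsub (Finset.mem_filter.mpr ⟨hfE, hwf⟩)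
          exact hfg (Finset.mem_singleton.mp this)
      · intro e heE
        refine ⟨rfl, ?_⟩
        show (if e = g then ({u} : Finset ℕ) else K.s e)
            = (if e ∈ ({g} : Finset ℕ) then insert u ((K.s e).erase w) else K.s e)
        by_cases heg : e = g
        · subst heg
          rw [if_pos rfl, if_pos (Finset.mem_singleton_self _), hsg]
          simp
        · rw [if_neg heg, if_neg (by simpa using heg)]
    set H2 : HyperGraph := ⟨K.V, K.E.erase g,
      fun n => if n ∈ K.E.erase g ∧ w ∈ K.r n then K.r n ∪ K.r g else K.r n,
      K.s⟩ with hH2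
    have hH1rg : H1.r g = K.r g := if_neg hwg
    have step2 : MinorStep H1 H2 := by
      refine Or.inr (Or.inr (Or.inl
        ⟨g, hg, u, if_pos rfl, ?_, ?_, (Finset.erase_insert huV).symm, rfl, ?_⟩))
      · intro e heE hne2 hnon
        obtain ⟨x, hx⟩ := hnon
        rw [Finset.mem_inter] at hx
        obtain ⟨hx1, hx2⟩ := hx
        have hx2' : x ∈ ({u} : Finset ℕ) := by
          have : H1.s g = {u} := if_pos rfl
          rwa [this] at hx2
        rw [Finset.mem_singleton] at hx2'; subst hx2'
        have hx1' : u ∈ K.s e := by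
          have : H1.s e = K.s e := if_neg hne2
          rwa [this] at hx1
        exact huV (hA1s e heE hx1')
      · intro e heE hu' hnon
        obtain ⟨x, hx⟩ := hnon
        rw [Finset.mem_inter, hH1rg] at hx
        obtain ⟨hx1, hx2⟩ := hx
        by_cases hw : w ∈ K.r e
        · have hre : K.r e = {w} := h3 e heE hw
          have : H1.r e = insert u (K.r e) := if_pos hw
          rw [this, hre, Finset.mem_insert, Finset.mem_singleton] at hx1
          rcases hx1 with rfl | rfl
          · exact huV (hA1r g hg hx2)
          · exact hwg hx2
        · have : H1.r e = K.r e := if_neg hw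
          rw [this] at hu'
          exact huV (hA1r e heE hu')
      · intro e heE
        obtain ⟨heg, heK⟩ := Finset.mem_erase.mp heE
        have hs1 : H1.s e = K.s e := if_neg heg
        refine ⟨hs1.symm, ?_⟩
        by_cases hw : w ∈ K.r e
        · have h1re : H1.r e = insert u (K.r e) := if_pos hw
          have huKre : u ∉ K.r e := fun h => huV (hA1r e heK h)
          have hmem : u ∈ H1.r e := by rw [h1re]; exact Finset.mem_insert_self u _
          show (if e ∈ K.E.erase g ∧ w ∈ K.r e then K.r e ∪ K.r g else K.r e)
              = (if u ∈ H1.r e then (H1.r e).erase u ∪ H1.r g else H1.r e)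
          rw [if_pos ⟨heE, hw⟩, if_pos hmem, h1re, Finset.erase_insert huKre, hH1rg]
        · have h1re : H1.r e = K.r e := if_neg hw
          have hmem : u ∉ H1.r e := by
            rw [h1re]; exact fun h => huV (hA1r e heK h)
          show (if e ∈ K.E.erase g ∧ w ∈ K.r e then K.r e ∪ K.r g else K.r e)
              = (if u ∈ H1.r e then (H1.r e).erase u ∪ H1.r g else H1.r e)
          rw [if_neg (fun h => hw h.2), if_neg hmem, h1re]
    have hf₁E2 : f₁ ∈ K.E.erase g := Finset.mem_erase.mpr ⟨hne, hf₁⟩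
    have hminor12 : IsMinor H2 K :=
      isMinor_trans (Relation.ReflTransGen.single step2) (Relation.ReflTransGen.single step1)
    rcases Finset.eq_empty_or_nonempty (K.r g) with hrgE | ⟨y, hy⟩
    · -- r g = ∅ : restore all ranges, then cut f₁
      have M1 : IsMinor ⟨K.V, K.E.erase g, K.r, K.s⟩ H2 := by
        apply minor_retarget_many ((K.E.erase g).filter (fun n => w ∈ K.r n)) H2 K.r
        · exact Finset.filter_subset _ _
        · intro n hn
          obtain ⟨hnE, hwn⟩ := Finset.mem_filter.mp hn
          refine ⟨w, ?_, h3 n (Finset.mem_of_mem_erase hnE) hwn⟩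
          show w ∈ (if n ∈ K.E.erase g ∧ w ∈ K.r n then K.r n ∪ K.r g else K.r n)
          rw [if_pos ⟨hnE, hwn⟩]
          exact Finset.mem_union_left _ hwn
        · intro n hn
          show K.r n = (if n ∈ K.E.erase g ∧ w ∈ K.r n then K.r n ∪ K.r g else K.r n)
          rw [if_neg (fun h => hn (Finset.mem_filter.mpr ⟨h.1, h.2⟩))]
      have M2 : IsMinor ⟨K.V, K.E.erase g, fun n => if n = f₁ then ∅ else K.r n, K.s⟩
          ⟨K.V, K.E.erase g, K.r, K.s⟩ :=
        minor_cut ⟨K.V, K.E.erase g, K.r, K.s⟩ hf₁E2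
      have hfun : (fun n => if n = f₁ then K.r g else K.r n)
          = (fun n => if n = f₁ then (∅ : Finset ℕ) else K.r n) := by rw [hrgE]
      rw [hfun]
      exact isMinor_trans (isMinor_trans M2 M1) hminor12
    · -- r g = {y}
      have hrgy : K.r g = {y} := by
        apply Finset.eq_singleton_iff_unique_mem.mpr
        exact ⟨hy, fun z hz => Finset.card_le_one.mp hcard z hz y hy⟩
      have M1 : IsMinor ⟨K.V, K.E.erase g,
          fun n => if n = f₁ then K.r g else K.r n, K.s⟩ H2 := by
        apply minor_retarget_many ((K.E.erase g).filter (fun n => w ∈ K.r n)) H2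
        · exact Finset.filter_subset _ _
        · intro n hn
          obtain ⟨hnE, hwn⟩ := Finset.mem_filter.mp hn
          have hrn : K.r n = {w} := h3 n (Finset.mem_of_mem_erase hnE) hwn
          by_cases hnf : n = f₁
          · subst hnf
            refine ⟨y, ?_, by rw [if_pos rfl, hrgy]⟩
            show y ∈ (if n ∈ K.E.erase g ∧ w ∈ K.r n then K.r n ∪ K.r g else K.r n)
            rw [if_pos ⟨hnE, hwn⟩]
            exact Finset.mem_union_right _ (hrgy ▸ Finset.mem_singleton_self y)
          · refine ⟨w, ?_, by rw [if_neg hnf, hrn]⟩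
            show w ∈ (if n ∈ K.E.erase g ∧ w ∈ K.r n then K.r n ∪ K.r g else K.r n)
            rw [if_pos ⟨hnE, hwn⟩]
            exact Finset.mem_union_left _ hwn
        · intro n hn
          have hnf : n ≠ f₁ := by
            rintro rfl
            exact hn (Finset.mem_filter.mpr ⟨hf₁E2, h4⟩)
          show (if n = f₁ then K.r g else K.r n)
              = (if n ∈ K.E.erase g ∧ w ∈ K.r n then K.r n ∪ K.r g else K.r n)
          rw [if_neg hnf, if_neg (fun h => hn (Finset.mem_filter.mpr ⟨h.1, h.2⟩))]
      exact isMinor_trans M1 hminor12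

end StepLemma

section ListHelpers

lemma chain'_mono_mem {α : Type*} {R S : α → α → Prop} :
    ∀ l : List α, (∀ a ∈ l, ∀ b ∈ l, R a b → S a b) → List.Chain' R l → List.Chain' S l
  | [], _, _ => List.isChain_nil
  | [a], _, _ => List.isChain_singleton a
  | a :: b :: t, h, hc => by
      unfold List.Chain' at hc ⊢
      rw [List.isChain_cons_cons] at hc ⊢
      refine ⟨h a (by simp) b (by simp) hc.1, chain'_mono_mem (b :: t) ?_ hc.2⟩
      intro x hx y hy
      exact h x (List.mem_cons_of_mem a hx) y (List.mem_cons_of_mem a hy)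

lemma pair_sublist_split {α : Type*} {a b : α} :
    ∀ {l : List α}, List.Sublist [a, b] l → ∃ l₁ l₂ l₃, l = l₁ ++ a :: (l₂ ++ b :: l₃) := by
  intro l
  induction l with
  | nil => intro h; exact absurd h (by simp)
  | cons x t ih =>
    intro h
    cases h with
    | cons _ h' =>
      obtain ⟨l₁, l₂, l₃, rfl⟩ := ih h'
      exact ⟨x :: l₁, l₂, l₃, rfl⟩
    | cons_cons _ h' =>
      have hb : b ∈ t := List.singleton_sublist.mp h'
      obtain ⟨s, t', rfl⟩ := List.append_of_mem hb
      exact ⟨[], s, t', rfl⟩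

lemma getLast_eq_of_eq {α : Type*} {L1 L2 : List α} (h : L1 = L2) (h1 : L1 ≠ [])
    (h2 : L2 ≠ []) : L1.getLast h1 = L2.getLast h2 := by subst h; rfl

lemma getLast_append_cons {α : Type*} :
    ∀ (xs : List α) (b : α) (t : List α),
      (xs ++ b :: t).getLast (by simp) = (b :: t).getLast (by simp)
  | [], b, t => rfl
  | x :: xs, b, t =>
      (List.getLast_cons (by simp)).trans (getLast_append_cons xs b t)

end ListHelpers

section MainAux

lemma path_contraction_aux (n : ℕ) :
    ∀ (H : HyperGraph) (f₁ : ℕ) (l : List ℕ), l.length ≤ n →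
    (∀ e ∈ H.E, H.s e ⊆ H.V) → (∀ e ∈ H.E, H.r e ⊆ H.V) →
    (∀ e ∈ H.E, (H.r e).card ≤ 1) →
    (∀ g ∈ l, (∃ f ∈ H.E, f ≠ g ∧ (H.s g ∩ H.s f).Nonempty) ∨
      ((H.r g).Nonempty ∧ H.r g ⊆ H.s g)) →
    H.IsPath (f₁ :: l) →
    (∀ g ∈ l, (H.s g).card = 1) →
    ∃ HΔ : HyperGraph, IsMinor HΔ H ∧ HΔ.V = H.V ∧ HΔ.E = H.E \ l.toFinset ∧
      (∀ e ∈ HΔ.E, HΔ.s e = H.s e) ∧ (∀ e ∈ HΔ.E, e ≠ f₁ → HΔ.r e = H.r e) ∧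
      (f₁ ∈ HΔ.E → HΔ.r f₁ = H.r ((f₁ :: l).getLast (List.cons_ne_nil _ _))) := by
  classical
  induction n with
  | zero =>
    intro H f₁ l hlen _ _ _ _ _ _
    have hl : l = [] := List.length_eq_zero_iff.mp (Nat.le_zero.mp hlen)
    subst hl
    exact ⟨H, isMinor_refl H, rfl, by simp, fun _ _ => rfl, fun _ _ _ => rfl, fun _ => rfl⟩
  | succ n ih =>
    intro H f₁ l hlen hA1s hA1r hA2 hA3 hpath hs
    cases l with
    | nil =>
      exact ⟨H, isMinor_refl H, rfl, by simp, fun _ _ => rfl, fun _ _ _ => rfl, fun _ => rfl⟩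
    | cons g l' =>
      obtain ⟨-, hmem, hchain⟩ := hpath
      have hf₁E : f₁ ∈ H.E := hmem f₁ (List.mem_cons_self)
      have hgE : g ∈ H.E := hmem g (List.mem_cons_of_mem _ (List.mem_cons_self))
      obtain ⟨w, hw⟩ := Finset.card_eq_one.mp (hs g (List.mem_cons_self))
      have hsingle : ∀ e ∈ H.E, ∀ x, x ∈ H.r e → H.r e = {x} := fun e he x hx =>
        Finset.eq_singleton_iff_unique_mem.mpr
          ⟨hx, fun z hz => Finset.card_le_one.mp (hA2 e he) z hz x hx⟩
      have hchain1 : (H.r f₁ ∩ H.s g).Nonempty := (List.isChain_cons_cons.mp hchain).1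
      have hwrf : w ∈ H.r f₁ := by
        obtain ⟨x, hx⟩ := hchain1
        rw [Finset.mem_inter, hw, Finset.mem_singleton] at hx
        rcases hx with ⟨h1, rfl⟩
        exact h1
      by_cases hf₁l : f₁ ∈ g :: l'
      · -- Shortcut 1 : f₁ occurs in the path tail
        obtain ⟨s1, t1, hsplit⟩ := List.append_of_mem hf₁l
        have hsub : ∀ x ∈ t1, x ∈ g :: l' := by
          intro x hx; rw [hsplit]
          exact List.mem_append_right _ (List.mem_cons_of_mem _ hx)
        have hsuf : (f₁ :: t1) <:+ (f₁ :: (g :: l')) := ⟨f₁ :: s1, by rw [hsplit]; simp⟩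
        have hchain2 := List.IsChain.suffix hchain hsuf
        have hlen2 : t1.length ≤ n := by
          have := congrArg List.length hsplit
          simp only [List.length_cons, List.length_append] at this hlen
          omega
        obtain ⟨HΔ', hmin', hV', hE', hs', hr', -⟩ :=
          ih H f₁ t1 hlen2 hA1s hA1r hA2
            (fun x hx => hA3 x (hsub x hx))
            ⟨List.cons_ne_nil _ _, fun e he => by
              rcases List.mem_cons.mp he with rfl | he'
              · exact hf₁E
              · exact hmem e (List.mem_cons_of_mem _ (hsub e he')), hchain2⟩
            (fun x hx => hs x (hsub x hx))
        refine ⟨⟨HΔ'.V, HΔ'.E \ (g :: l').toFinset, HΔ'.r, HΔ'.s⟩,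
          isMinor_trans (minor_sdiff HΔ' _) hmin', hV', ?_, ?_, ?_, ?_⟩
        · show HΔ'.E \ (g :: l').toFinset = H.E \ (g :: l').toFinset
          rw [hE']
          ext x
          simp only [Finset.mem_sdiff, List.mem_toFinset]
          constructor
          · rintro ⟨⟨h1, _⟩, h3⟩; exact ⟨h1, h3⟩
          · rintro ⟨h1, h3⟩; exact ⟨⟨h1, fun hx => h3 (hsub x hx)⟩, h3⟩
        · intro e he; exact hs' e (Finset.mem_sdiff.mp he).1
        · intro e he hne; exact hr' e (Finset.mem_sdiff.mp he).1 hne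
        · intro hf₁Δ
          exact absurd (List.mem_toFinset.mpr hf₁l) (Finset.mem_sdiff.mp hf₁Δ).2
      · by_cases hdup : ∃ a b, List.Sublist [a, b] (g :: l') ∧ H.s a = H.s b
        · -- Shortcut 2 : two edges of the tail with equal (singleton) sources
          obtain ⟨a, b, hsl, hsab⟩ := hdup
          obtain ⟨l₁, l₂, l₃, hsplit⟩ := pair_sublist_split hsl
          have hC := hchain
          rw [show f₁ :: g :: l' = (f₁ :: l₁) ++ ((a :: l₂) ++ (b :: l₃)) by
            rw [hsplit]; simp] at hC
          unfold List.Chain' at hC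
          rw [List.isChain_append, List.isChain_append] at hC
          obtain ⟨hc1, ⟨hc2, hc3, hlink2⟩, hlink1⟩ := hC
          have hchain2 : List.Chain' (fun x y => (H.r x ∩ H.s y).Nonempty)
              ((f₁ :: l₁) ++ (b :: l₃)) := by
            unfold List.Chain'
            rw [List.isChain_append]
            refine ⟨hc1, hc3, ?_⟩
            intro x hx y hy
            simp only [List.head?_cons, Option.mem_some_iff] at hy
            subst hy
            have hxa := hlink1 x hx a (by simp)
            rw [hsab] at hxa
            exact hxa
          have hsubL : ∀ x ∈ l₁ ++ b :: l₃, x ∈ g :: l' := by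
            intro x hx
            rw [hsplit]
            simp only [List.mem_append, List.mem_cons] at hx ⊢
            tauto
          have hlen2 : (l₁ ++ b :: l₃).length ≤ n := by
            have := congrArg List.length hsplit
            simp only [List.length_cons, List.length_append] at this hlen ⊢
            omega
          have hpath2 : H.IsPath (f₁ :: (l₁ ++ b :: l₃)) := by
            refine ⟨List.cons_ne_nil _ _, ?_, ?_⟩
            · intro e he
              rcases List.mem_cons.mp he with rfl | he'
              · exact hf₁E
              · exact hmem e (List.mem_cons_of_mem _ (hsubL e he'))
            · have heq : f₁ :: (l₁ ++ b :: l₃) = (f₁ :: l₁) ++ (b :: l₃) := by simp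
              rw [heq]
              exact hchain2
          obtain ⟨HΔ', hmin', hV', hE', hs', hr', hlast'⟩ :=
            ih H f₁ (l₁ ++ b :: l₃) hlen2 hA1s hA1r hA2
              (fun x hx => hA3 x (hsubL x hx)) hpath2 (fun x hx => hs x (hsubL x hx))
          refine ⟨⟨HΔ'.V, HΔ'.E \ (g :: l').toFinset, HΔ'.r, HΔ'.s⟩,
            isMinor_trans (minor_sdiff HΔ' _) hmin', hV', ?_, ?_, ?_, ?_⟩
          · show HΔ'.E \ (g :: l').toFinset = H.E \ (g :: l').toFinset
            rw [hE']
            ext x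
            simp only [Finset.mem_sdiff, List.mem_toFinset]
            constructor
            · rintro ⟨⟨h1, _⟩, h3⟩; exact ⟨h1, h3⟩
            · rintro ⟨h1, h3⟩; exact ⟨⟨h1, fun hx => h3 (hsubL x hx)⟩, h3⟩
          · intro e he; exact hs' e (Finset.mem_sdiff.mp he).1
          · intro e he hne; exact hr' e (Finset.mem_sdiff.mp he).1 hne
          · intro hf₁Δ
            have hf₁Δ' : f₁ ∈ HΔ'.E := (Finset.mem_sdiff.mp hf₁Δ).1
            have heq0 := hlast' hf₁Δ'
            show HΔ'.r f₁ = _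
            rw [heq0]
            have e1 : (f₁ :: (l₁ ++ b :: l₃)).getLast (List.cons_ne_nil _ _)
                = (b :: l₃).getLast (List.cons_ne_nil _ _) :=
              (getLast_eq_of_eq (by simp) _ (by simp)).trans (getLast_append_cons (f₁ :: l₁) b l₃)
            have e2 : (f₁ :: g :: l').getLast (List.cons_ne_nil _ _)
                = (b :: l₃).getLast (List.cons_ne_nil _ _) :=
              (getLast_eq_of_eq (by rw [hsplit]; simp) _ (by simp)).trans
                (getLast_append_cons ((f₁ :: l₁) ++ (a :: l₂)) b l₃)
            rw [e1, e2]
        · -- Main case : contract the first edge of the tail into f₁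
          push_neg at hdup
          have hpair : ∀ a b, List.Sublist [a, b] (g :: l') → H.s a ≠ H.s b :=
            fun a b hab => hdup a b hab
          have hf₁g : f₁ ≠ g := fun h => hf₁l (h ▸ List.mem_cons_self)
          have hf₁l' : f₁ ∉ l' := fun h => hf₁l (List.mem_cons_of_mem _ h)
          have hgl' : g ∉ l' := fun h =>
            hpair g g (List.Sublist.cons_cons _ (List.singleton_sublist.mpr h)) rfl
          have h6 : w ∈ H.r g ∨ ∃ f ∈ H.E, f ≠ g ∧ w ∈ H.s f := by
            rcases hA3 g (List.mem_cons_self) with ⟨f, hfE, hffg, hnon⟩ | ⟨hne', hsub'⟩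
            · right
              refine ⟨f, hfE, hffg, ?_⟩
              obtain ⟨x, hx⟩ := hnon
              rw [Finset.mem_inter, hw, Finset.mem_singleton] at hx
              rcases hx with ⟨rfl, h2⟩
              exact h2
            · left
              obtain ⟨x, hx⟩ := hne'
              have hxw := hsub' hx
              rw [hw, Finset.mem_singleton] at hxw
              exact hxw ▸ hx
          set K : HyperGraph := ⟨H.V, H.E.erase g,
            fun m => if m = f₁ then H.r g else H.r m, H.s⟩ with hK
          have hstep : IsMinor K H :=
            step_lemma H f₁ g w hgE hf₁E hf₁g hw hA1s hA1r
              (fun e he hx => hsingle e he w hx) hwrf (hA2 g hgE) h6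
          have hKrne : ∀ x, x ≠ f₁ → K.r x = H.r x := fun x hx => if_neg hx
          have hKrf₁ : K.r f₁ = H.r g := if_pos rfl
          have hlE : ∀ x ∈ l', x ∈ K.E := fun x hx =>
            Finset.mem_erase.mpr ⟨fun h => hgl' (h ▸ hx),
              hmem x (List.mem_cons_of_mem _ (List.mem_cons_of_mem _ hx))⟩
          have hchainl' := (List.isChain_cons_cons.mp hchain).2
          have hpath' : K.IsPath (f₁ :: l') := by
            refine ⟨List.cons_ne_nil _ _, ?_, ?_⟩
            · intro e he
              rcases List.mem_cons.mp he with rfl | he'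
              · exact Finset.mem_erase.mpr ⟨hf₁g, hf₁E⟩
              · exact hlE e he'
            · cases l' with
              | nil => exact List.isChain_singleton _
              | cons b t =>
                unfold List.Chain'
                rw [List.isChain_cons_cons]
                constructor
                · have hgb : (H.r g ∩ H.s b).Nonempty := (List.isChain_cons_cons.mp hchainl').1
                  show (K.r f₁ ∩ K.s b).Nonempty
                  rw [hKrf₁]
                  exact hgb
                · refine chain'_mono_mem (b :: t) ?_ (List.isChain_cons_cons.mp hchainl').2
                  intro x hx y _ hR
                  have hxne : x ≠ f₁ := fun h => hf₁l' (h ▸ hx)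
                  show (K.r x ∩ K.s y).Nonempty
                  rw [hKrne x hxne]
                  exact hR
          have hA1r' : ∀ e ∈ K.E, K.r e ⊆ K.V := by
            intro e he
            by_cases hef : e = f₁
            · subst hef
              show K.r e ⊆ K.V
              rw [hKrf₁]
              exact hA1r g hgE
            · rw [hKrne e hef]
              exact hA1r e (Finset.mem_of_mem_erase he)
          have hA2' : ∀ e ∈ K.E, (K.r e).card ≤ 1 := by
            intro e he
            by_cases hef : e = f₁
            · subst hef
              rw [hKrf₁]
              exact hA2 g hgE
            · rw [hKrne e hef]
              exact hA2 e (Finset.mem_of_mem_erase he)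
          have hA3' : ∀ g' ∈ l', (∃ f ∈ K.E, f ≠ g' ∧ (K.s g' ∩ K.s f).Nonempty) ∨
              ((K.r g').Nonempty ∧ K.r g' ⊆ K.s g') := by
            intro g' hg'
            have hg'ne : g' ≠ f₁ := fun h => hf₁l' (h ▸ hg')
            rcases hA3 g' (List.mem_cons_of_mem _ hg') with ⟨f, hfE, hffg', hnon⟩ | ⟨hne', hsub'⟩
            · by_cases hfgg : f = g
              · exfalso
                subst hfgg
                obtain ⟨w', hw'⟩ := Finset.card_eq_one.mp (hs g' (List.mem_cons_of_mem _ hg'))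
                obtain ⟨x, hx⟩ := hnon
                rw [Finset.mem_inter, hw', hw, Finset.mem_singleton, Finset.mem_singleton] at hx
                have hww : H.s f = H.s g' := by rw [hw, hw', ← hx.1, ← hx.2]
                exact hpair f g' (List.Sublist.cons_cons _ (List.singleton_sublist.mpr hg')) hww
              · left
                refine ⟨f, Finset.mem_erase.mpr ⟨hfgg, hfE⟩, hffg', ?_⟩
                show (K.s g' ∩ K.s f).Nonempty
                exact hnon
            · right
              constructor
              · show (K.r g').Nonempty
                rw [hKrne g' hg'ne]
                exact hne'
              · show K.r g' ⊆ K.s g'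
                rw [hKrne g' hg'ne]
                exact hsub'
          obtain ⟨HΔ, hmin, hV, hE, hsq, hrq, hlast⟩ :=
            ih K f₁ l' (by simp only [List.length_cons] at hlen; omega)
              (fun e he => hA1s e (Finset.mem_of_mem_erase he)) hA1r' hA2' hA3' hpath'
              (fun x hx => hs x (List.mem_cons_of_mem _ hx))
          refine ⟨HΔ, isMinor_trans hmin hstep, hV, ?_, ?_, ?_, ?_⟩
          · rw [hE]
            show H.E.erase g \ l'.toFinset = H.E \ (g :: l').toFinset
            ext x
            simp only [Finset.mem_sdiff, Finset.mem_erase, List.toFinset_cons,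
              Finset.mem_insert, List.mem_toFinset]
            tauto
          · intro e he
            exact hsq e he
          · intro e he hne
            rw [hrq e he hne]
            exact hKrne e hne
          · intro hf₁Δ
            have h0 := hlast hf₁Δ
            cases l' with
            | nil =>
              rw [h0]
              show K.r f₁ = H.r g
              exact hKrf₁
            | cons b t =>
              have hgl2 : (f₁ :: b :: t).getLast (List.cons_ne_nil _ _)
                  = (b :: t).getLast (List.cons_ne_nil _ _) := getLast_append_cons [f₁] b t
              have hgl3 : (f₁ :: g :: b :: t).getLast (List.cons_ne_nil _ _)
                  = (b :: t).getLast (List.cons_ne_nil _ _) := getLast_append_cons [f₁, g] b t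
              have hlastmem : (b :: t).getLast (List.cons_ne_nil _ _) ∈ b :: t :=
                List.getLast_mem _
              have hlne : (b :: t).getLast (List.cons_ne_nil _ _) ≠ f₁ := fun h =>
                hf₁l' (h ▸ hlastmem)
              calc HΔ.r f₁ = K.r ((f₁ :: b :: t).getLast (List.cons_ne_nil _ _)) := h0
                _ = K.r ((b :: t).getLast (List.cons_ne_nil _ _)) := congrArg K.r hgl2
                _ = H.r ((b :: t).getLast (List.cons_ne_nil _ _)) := hKrne _ hlne
                _ = H.r ((f₁ :: g :: b :: t).getLast (List.cons_ne_nil _ _)) :=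
                    (congrArg H.r hgl3).symm

end MainAux
end HyperGraph

open HyperGraph in
/-- Path contraction: if `f₁ :: l` is a path in a normal hypergraph `H` with
`|s g| = 1` for every edge `g` of `l`, then the hypergraph with the same
vertices, edge set `E \ l`, unchanged sources, unchanged ranges except that
the range of `f₁` becomes the range of the last edge of the path, is a
hypergraph minor of `H`. -/
theorem path_contraction_minor (H : HyperGraph) (hWF : H.WF) (hN : H.Normal)
    (f₁ : ℕ) (l : List ℕ) (hpath : H.IsPath (f₁ :: l))
    (hs : ∀ g ∈ l, (H.s g).card = 1) :
    ∃ HΔ : HyperGraph, IsMinor HΔ H ∧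
      HΔ.V = H.V ∧
      HΔ.E = H.E \ l.toFinset ∧
      (∀ e ∈ HΔ.E, HΔ.s e = H.s e) ∧
      (∀ e ∈ HΔ.E, e ≠ f₁ → HΔ.r e = H.r e) ∧
      (f₁ ∈ HΔ.E →
        HΔ.r f₁ = H.r ((f₁ :: l).getLast (List.cons_ne_nil _ _))) := by
  exact path_contraction_aux l.length H f₁ l le_rfl
    (fun e he => (hWF e he).1) (fun e he => (hWF e he).2.1) hN.1
    (fun g hg => hN.2.1 g (hpath.2.1 g (List.mem_cons_of_mem _ hg))) hpath hs
end

section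
/- Let HΓ be a finite hypergraph and let v be a vertex. Obtain HΓ' from HΓ by cutting all edges e with s(e) = {v} or r(e) = {v}. Then the set S = {v} ∪ {e ∈ E^1(HΓ') : s(e) = {v}} is ideally closed in HΓ'. -/
/-! Basic notions of (finite, directed) hypergraphs, following
Trieb–Weber-style hypergraph C*-algebra combinatorics. Vertices and edges
are labelled by natural numbers. -/

structure DHypergraph where
  V : Finset ℕ
  E : Finset ℕ
  r : ℕ → Finset ℕ
  s : ℕ → Finset ℕ

namespace DHypergraph

/-- Well-formedness: sources and ranges of edges consist of vertices,
and every edge has a nonempty source. -/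
def WF (H : DHypergraph) : Prop :=
  ∀ e ∈ H.E, H.s e ⊆ H.V ∧ H.r e ⊆ H.V ∧ (H.s e).Nonempty

/-- A vertex is a sink if no edge has it in its source. -/
def IsSink (H : DHypergraph) (v : ℕ) : Prop := ∀ e ∈ H.E, v ∉ H.s e

/-- A path is a nonempty list of edges such that the range of each edge
meets the source of the next one. -/
def IsPath (H : DHypergraph) (l : List ℕ) : Prop :=
  l ≠ [] ∧ (∀ e ∈ l, e ∈ H.E) ∧
    List.Chain' (fun a b => (H.r a ∩ H.s b).Nonempty) l

/-- There is a path starting with edge `e` and ending with edge `f`. -/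
def PathTo (H : DHypergraph) (e f : ℕ) : Prop :=
  ∃ l : List ℕ, H.IsPath l ∧ l.head? = some e ∧ l.getLast? = some f

/-- The set of edges from which there is a path ending with `f₀`
(the "easy edge set" when `f₀` is easy). -/
noncomputable def easySet (H : DHypergraph) (f₀ : ℕ) : Finset ℕ :=
  @Finset.filter ℕ (fun e => H.PathTo e f₀) (fun _ => Classical.propDecidable _) H.E

/-- An edge `f₀` is easy if every edge from which there is a path to `f₀`
has exactly one vertex in its source and exactly one vertex in its range. -/
def IsEasyEdge (H : DHypergraph) (f₀ : ℕ) : Prop :=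
  f₀ ∈ H.E ∧ ∀ f ∈ H.easySet f₀, (H.s f).card = 1 ∧ (H.r f).card = 1

/-- An easy cycle of length `n`, given by edges `f 0, …, f (n-1)` and
range vertices `w 0, …, w (n-1)` (indices taken mod `n`). -/
def IsEasyCycle (H : DHypergraph) (n : ℕ) (f w : ℕ → ℕ) : Prop :=
  0 < n ∧ (∀ i < n, f i ∈ H.E) ∧
  (∀ i < n, (H.r (f i) ∩ H.s (f ((i + 1) % n))).Nonempty) ∧
  (∀ i < n, ∀ j < n, (H.r (f i) ∩ H.s (f j)).Nonempty → j = (i + 1) % n) ∧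
  (∀ i < n, H.r (f i) = {w i}) ∧
  (∀ i < n, ∀ e ∈ H.E, w i ∈ H.r e → e = f i) ∧
  (∀ i < n, ∀ e ∈ H.E, w i ∈ H.s e → e = f ((i + 1) % n))

/-- A simple quasisink: at most one outgoing edge, which must have empty
range, and at most one incoming edge. -/
def IsSimpleQuasisink (H : DHypergraph) (w : ℕ) : Prop :=
  (∀ e ∈ H.E, ∀ f ∈ H.E, w ∈ H.s e → w ∈ H.s f → e = f) ∧
  (∀ e ∈ H.E, w ∈ H.s e → H.r e = ∅) ∧
  (∀ e ∈ H.E, ∀ f ∈ H.E, w ∈ H.r e → w ∈ H.r f → e = f)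

/-- Normality of a hypergraph. -/
def Normal (H : DHypergraph) : Prop :=
  (∀ e ∈ H.E, (H.r e).card ≤ 1) ∧
  (∀ e ∈ H.E,
    (∃ f ∈ H.E, f ≠ e ∧ (H.s e ∩ H.s f).Nonempty) ∨
    ((H.r e).Nonempty ∧ H.r e ⊆ H.s e)) ∧
  (∀ e ∈ H.E, ∀ f ∈ H.E, e ≠ f → (H.s e ∩ H.s f).card = 1 →
    ((H.s e).card = 1 ∧ (H.s f).card = 1) ∨
    ∃ g ∈ H.E, g ≠ e ∧ (H.s e ∩ H.s f) ⊂ (H.s e ∩ H.s g))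

/-- A reduced hypergraph: normal, no easy edge, no easy cycle, and no
edge ending in a simple quasisink. -/
def Reduced (H : DHypergraph) : Prop :=
  H.Normal ∧ (¬∃ f₀, H.IsEasyEdge f₀) ∧ (¬∃ n f w, H.IsEasyCycle n f w) ∧
  ¬∃ f ∈ H.E, ∃ w, H.r f = {w} ∧ H.IsSimpleQuasisink w

/-- A set of vertices `SV` and edges `SE` is ideally closed. -/
def IdeallyClosed (H : DHypergraph) (SV SE : Finset ℕ) : Prop :=
  SV ⊆ H.V ∧ SE ⊆ H.E ∧
  (∀ e ∈ SE, H.r e ⊆ SV) ∧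
  (∀ e ∈ H.E, (H.s e ⊆ SV ∨ ((H.r e).Nonempty ∧ H.r e ⊆ SV)) → e ∈ SE) ∧
  (∀ v ∈ H.V, ¬H.IsSink v → (∀ e ∈ H.E, v ∈ H.s e → e ∈ SE) → v ∈ SV)

/-! ### The seven minor operations, as relations -/

def IsVertexDeletion (H H' : DHypergraph) : Prop :=
  ∃ v ∈ H.V,
    H'.V = H.V.erase v ∧
    H'.E = H.E.filter (fun e => ¬ H.s e = {v}) ∧
    ∀ e ∈ H'.E, H'.r e = (H.r e).erase v ∧ H'.s e = (H.s e).erase v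

def IsEdgeDeletion (H H' : DHypergraph) : Prop :=
  ∃ f ∈ H.E,
    H'.V = H.V ∧ H'.E = H.E.erase f ∧
    ∀ e ∈ H'.E, H'.r e = H.r e ∧ H'.s e = H.s e

def IsForwardContraction (H H' : DHypergraph) : Prop :=
  ∃ f ∈ H.E, ∃ w,
    H.s f = {w} ∧
    (∀ e ∈ H.E, e ≠ f → ¬(H.s e ∩ H.s f).Nonempty) ∧
    (∀ e ∈ H.E, w ∈ H.r e → ¬(H.r e ∩ H.r f).Nonempty) ∧
    H'.V = H.V.erase w ∧ H'.E = H.E.erase f ∧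
    ∀ e ∈ H'.E,
      H'.s e = H.s e ∧
      H'.r e = (if w ∈ H.r e then (H.r e).erase w ∪ H.r f else H.r e)

def IsBackwardContractionAt (H H' : DHypergraph) (f : ℕ) : Prop :=
  f ∈ H.E ∧ ∃ w,
    H.r f = {w} ∧
    (∀ e ∈ H.E, e ≠ f → ¬(H.s e ∩ H.s f).Nonempty) ∧
    (∀ e ∈ H.E, (H.r e ∩ H.s f).Nonempty → w ∉ H.r e) ∧
    H'.V = H.V.erase w ∧ H'.E = H.E.erase f ∧
    ∀ e ∈ H'.E,
      H'.r e = (if w ∈ H.r e then (H.r e).erase w ∪ H.s f else H.r e) ∧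
      H'.s e = (if w ∈ H.s e then (H.s e).erase w ∪ H.s f else H.s e)

def IsBackwardContraction (H H' : DHypergraph) : Prop :=
  ∃ f, IsBackwardContractionAt H H' f

def IsEdgeCutting (H H' : DHypergraph) : Prop :=
  ∃ f ∈ H.E,
    H'.V = H.V ∧ H'.E = H.E ∧
    (∀ e ∈ H.E, H'.s e = H.s e) ∧
    (∀ e ∈ H.E, e ≠ f → H'.r e = H.r e) ∧
    H'.r f = ∅

def IsSourceSeparation (H H' : DHypergraph) : Prop :=
  ∃ (F : Finset ℕ) (w w' : ℕ),
    w ∈ H.V ∧ w' ∉ H.V ∧ F.Nonempty ∧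
    F ⊂ H.E.filter (fun e => w ∈ H.s e) ∧
    H'.V = insert w' H.V ∧ H'.E = H.E ∧
    ∀ e ∈ H.E,
      H'.r e = (if w ∈ H.r e then insert w' (H.r e) else H.r e) ∧
      H'.s e = (if e ∈ F then insert w' ((H.s e).erase w) else H.s e)

def IsRangeDecomposition (H H' : DHypergraph) : Prop :=
  ∃ f ∈ H.E, ∃ ι : ℕ → ℕ,
    (H.r f).Nonempty ∧
    (∀ v ∈ H.r f, ι v ∉ H.E) ∧
    Set.InjOn ι (H.r f : Set ℕ) ∧
    H'.V = H.V ∧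
    H'.E = H.E.erase f ∪ (H.r f).image ι ∧
    (∀ e ∈ H.E.erase f, H'.r e = H.r e ∧ H'.s e = H.s e) ∧
    (∀ v ∈ H.r f, H'.r (ι v) = {v} ∧ H'.s (ι v) = H.s f)

/-- One application of a minor operation. -/
def MinorStep (H H' : DHypergraph) : Prop :=
  IsVertexDeletion H H' ∨ IsEdgeDeletion H H' ∨ IsForwardContraction H H' ∨
  IsBackwardContraction H H' ∨ IsEdgeCutting H H' ∨ IsSourceSeparation H H' ∨
  IsRangeDecomposition H H'

/-- `IsMinor H' H` : the hypergraph `H'` is obtained from `H` by a finite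
combination of minor operations (`H' ≤ H`). -/
def IsMinor (H' H : DHypergraph) : Prop := Relation.ReflTransGen MinorStep H H'

/-! ### The four forbidden minors (up to labelling) -/

def IsHGamma1 (H : DHypergraph) : Prop :=
  ∃ v₁ v₂ v₃ e f : ℕ, v₁ ≠ v₂ ∧ v₁ ≠ v₃ ∧ v₂ ≠ v₃ ∧ e ≠ f ∧
    H.V = {v₁, v₂, v₃} ∧ H.E = {e, f} ∧
    H.s e = {v₁, v₂, v₃} ∧ H.s f = {v₁, v₂, v₃} ∧ H.r e = ∅ ∧ H.r f = ∅

def IsHGamma2 (H : DHypergraph) : Prop :=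
  ∃ v₁ v₂ e f g : ℕ, v₁ ≠ v₂ ∧ e ≠ f ∧ e ≠ g ∧ f ≠ g ∧
    H.V = {v₁, v₂} ∧ H.E = {e, f, g} ∧
    H.s e = {v₁, v₂} ∧ H.s f = {v₁, v₂} ∧ H.s g = {v₁, v₂} ∧
    H.r e = ∅ ∧ H.r f = ∅ ∧ H.r g = ∅

def IsHGamma3 (H : DHypergraph) : Prop :=
  ∃ v w e f : ℕ, v ≠ w ∧ e ≠ f ∧
    H.V = {v, w} ∧ H.E = {e, f} ∧
    H.s e = {v, w} ∧ H.s f = {v, w} ∧ H.r e = ∅ ∧ H.r f = {w}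

def IsHGamma4 (H : DHypergraph) : Prop :=
  ∃ v₁ v₂ w e f : ℕ, v₁ ≠ v₂ ∧ v₁ ≠ w ∧ v₂ ≠ w ∧ e ≠ f ∧
    H.V = {v₁, v₂, w} ∧ H.E = {e, f} ∧
    H.s e = {v₁, v₂} ∧ H.s f = {v₁, v₂} ∧ H.r e = {w} ∧ H.r f = {w}

/-! ### Deletion of sets of vertices and edges -/

/-- Delete the vertices `SV` and edges `SE` (an edge whose source becomes
empty is removed as well). -/
def deleteSet (H : DHypergraph) (SV SE : Finset ℕ) : DHypergraph where
  V := H.V \ SV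
  E := (H.E \ SE).filter (fun e => ¬ H.s e ⊆ SV)
  r := fun e => H.r e \ SV
  s := fun e => H.s e \ SV

/-- Delete a single vertex. -/
def deleteVertex (H : DHypergraph) (v : ℕ) : DHypergraph where
  V := H.V.erase v
  E := H.E.filter (fun e => ¬ H.s e = {v})
  r := fun e => (H.r e).erase v
  s := fun e => (H.s e).erase v

/-- Delete a single edge. -/
def deleteEdge (H : DHypergraph) (f : ℕ) : DHypergraph where
  V := H.V
  E := H.E.erase f
  r := H.r
  s := H.s

/-- Delete an item: `Sum.inl v` is a vertex, `Sum.inr f` is an edge. -/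
def deleteItem (H : DHypergraph) : ℕ ⊕ ℕ → DHypergraph
  | Sum.inl v => H.deleteVertex v
  | Sum.inr f => H.deleteEdge f

/-- Delete the items of a list one at a time, from the left. -/
def deleteList (H : DHypergraph) (l : List (ℕ ⊕ ℕ)) : DHypergraph :=
  l.foldl deleteItem H

/-- Range decomposition applied simultaneously to all edges: an edge `e`
with at least two vertices in its range is replaced by the edges
`Nat.pair e (v+1)` for `v ∈ r e`, with range `{v}` and source `s e`;
all other edges are kept (renamed `Nat.pair e 0`). -/
def rangeDecomposeAll (H : DHypergraph) : DHypergraph where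
  V := H.V
  E := H.E.biUnion (fun e =>
    if (H.r e).card ≤ 1 then {Nat.pair e 0}
    else (H.r e).image (fun v => Nat.pair e (v + 1)))
  r := fun n => if n.unpair.2 = 0 then H.r n.unpair.1 else {n.unpair.2 - 1}
  s := fun n => H.s n.unpair.1

end DHypergraph

open DHypergraph in
/-- Let `H'` be obtained from `H` by cutting all edges `e` with
`s e = {v}` or `r e = {v}`. Then `S = {v} ∪ {e ∈ E : s e = {v}}` is
ideally closed in `H'`. -/
theorem cut_at_vertex_ideallyClosed (H : DHypergraph) (hWF : H.WF)
    (v : ℕ) (hv : v ∈ H.V)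
    (H' : DHypergraph)
    (hV : H'.V = H.V) (hE : H'.E = H.E)
    (hr : ∀ e, H'.r e = if H.s e = {v} ∨ H.r e = {v} then ∅ else H.r e)
    (hs : ∀ e, H'.s e = H.s e) :
    H'.IdeallyClosed {v} (H.E.filter (fun e => H.s e = {v})) := by
  refine ⟨?_, ?_, ?_, ?_, ?_⟩
  · simp [hV, hv]
  · rw [hE]; exact Finset.filter_subset _ _
  · intro e he
    rw [Finset.mem_filter] at he
    rw [hr]
    simp [he.2]
  · intro e he hcase
    rw [hE] at he
    rcases hcase with h | ⟨hne, hsub⟩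
    · rw [hs] at h
      rw [Finset.mem_filter]
      exact ⟨he, Finset.Subset.antisymm h (Finset.singleton_subset_iff.mpr
        ((hWF e he).2.2.elim fun x hx => by
          have := h hx; simp at this; subst this; exact hx))⟩
    · rw [hr] at hne hsub
      split_ifs at hne hsub with hcond
      · simp at hne
      · exfalso
        exact hcond (Or.inr (Finset.Subset.antisymm hsub
          (Finset.singleton_subset_iff.mpr (hne.elim fun x hx => by
            have := hsub hx; simp at this; subst this; exact hx))))
  · intro w hw hns hall
    simp only [IsSink, not_forall] at hns
    obtain ⟨e, he, hwe⟩ := hns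
    simp only [not_not] at hwe
    rw [hE] at he
    rw [hs] at hwe
    have := hall e (by rw [hE]; exact he) (by rw [hs]; exact hwe)
    rw [Finset.mem_filter] at this
    rw [this.2] at hwe
    simpa using hwe
end

section
/- Let HΓ be a finite hypergraph and suppose HΔ is obtained from HΓ by deleting an ideally closed set S ⊆ E^0(HΓ) ∪ E^1(HΓ). Then: (a) every edge of HΔ with nonempty range in HΓ still has nonempty range in HΔ; and (b) every vertex of HΔ that is a sink in HΔ was already a sink in HΓ. -/
open NatHypergraph in
/-- If `HΔ` is obtained from `H` by deleting an ideally closed set, then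
(a) every edge of `HΔ` whose range in `H` was nonempty still has nonempty
range in `HΔ`, and (b) every vertex of `HΔ` that is a sink in `HΔ` was
already a sink in `H`. -/
theorem deleteSet_ideallyClosed_preserves (H : NatHypergraph)
    (SV SE : Finset ℕ) (hIC : H.IdeallyClosed SV SE) :
    (∀ e ∈ (H.deleteSet SV SE).E, (H.r e).Nonempty →
      ((H.deleteSet SV SE).r e).Nonempty) ∧
    (∀ v ∈ (H.deleteSet SV SE).V, (H.deleteSet SV SE).IsSink v →
      H.IsSink v) := by
  obtain ⟨hSV, hSE, hr, hclose, hsink⟩ := hIC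
  constructor
  · intro e he hne
    simp only [deleteSet, Finset.mem_filter, Finset.mem_sdiff] at he
    obtain ⟨⟨heE, heS⟩, hs⟩ := he
    by_contra h
    simp only [deleteSet] at h
    rw [Finset.not_nonempty_iff_eq_empty, Finset.sdiff_eq_empty_iff_subset] at h
    exact heS (hclose e heE (Or.inr ⟨hne, h⟩))
  · intro v hv hvs e heE hes
    simp only [deleteSet, Finset.mem_sdiff] at hv
    obtain ⟨hvV, hvSV⟩ := hv
    have hnotsink : ¬ H.IsSink v := fun h => h e heE hes
    have : ¬ ∀ f ∈ H.E, v ∈ H.s f → f ∈ SE := by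
      intro hall
      exact hvSV (hsink v hvV hnotsink hall)
    push_neg at this
    obtain ⟨f, hfE, hvf, hfSE⟩ := this
    have hfΔ : f ∈ (H.deleteSet SV SE).E := by
      simp only [deleteSet, Finset.mem_filter, Finset.mem_sdiff]
      exact ⟨⟨hfE, hfSE⟩, fun hsub => hvSV (hsub hvf)⟩
    exact hvs f hfΔ (Finset.mem_sdiff.mpr ⟨hvf, hvSV⟩)
end
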